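/- Let A be an n×n zero-one matrix, and let A^↻#A denote the 2n×2n block matrix with A^↻ (A rotated 180 degrees) in the top-left block, A in the bottom-right block, and all-ones n×n matrices in the off-diagonal blocks. Then RB^{A^↻#A}(q,t) = Σ_{i=0}^{n} R_{n−i}^{A}(q²) · [i]!_{q²} · q^{−i²} · t^{i}. -/

import Mathlib

open Finset

/-- A board: the set of one-entries (cells) of a zero-one matrix, as (row, column) pairs. -/
abbrev Board := Finset (ℕ × ℕ)

/-- The full `m × n` grid of cells. -/
def grid (m n : ℕ) : Board := Finset.range m ×ˢ Finset.range n

/-- The (non-taking) rook configurations on the board `A` with `k` rooks. -/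
def rookConfigs (A : Board) (k : ℕ) : Finset Board :=
  A.powerset.filter fun C =>
    C.card = k ∧ ∀ c ∈ C, ∀ c' ∈ C, c ≠ c' → c.1 ≠ c'.1 ∧ c.2 ≠ c'.2

/-- `invStat m n C`: the number of (not necessarily positive) cells of an `m × n` matrix
having no rook of the configuration `C` weakly to the right in the same row nor weakly
below in the same column. -/
def invStat (m n : ℕ) (C : Board) : ℕ :=
  ((grid m n).filter fun a =>
    (∀ c ∈ C, c.1 = a.1 → c.2 < a.2) ∧ (∀ c ∈ C, c.2 = a.2 → c.1 < a.1)).card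

/-- The `k`-th `q`-rook number of a board `A` of ambient matrix size `m × n`. -/
def qRook {F : Type*} [CommSemiring F] (q : F) (m n : ℕ) (A : Board) (k : ℕ) : F :=
  ∑ C ∈ rookConfigs A k, q ^ invStat m n C

/-- The `q`-analogue `[x]_q = 1 + q + ⋯ + q^(x-1)`. -/
def qInt {F : Type*} [CommSemiring F] (q : F) (x : ℕ) : F := ∑ i ∈ Finset.range x, q ^ i

/-- The `q`-factorial `[n]!_q = [1]_q [2]_q ⋯ [n]_q`. -/
def qFact {F : Type*} [CommSemiring F] (q : F) (n : ℕ) : F := ∏ i ∈ Finset.range n, qInt q (i + 1)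

/-- The `q`-Stirling numbers `S_{n,k}(q)` of Garsia and Remmel. -/
def qStirling {F : Type*} [CommSemiring F] (q : F) : ℕ → ℕ → F
  | 0, 0 => 1
  | 0, _ + 1 => 0
  | n + 1, k => (if k = 0 then 0 else q ^ (k - 1) * qStirling q n (k - 1)) + qInt q k * qStirling q n k

/-- Stirling numbers of the second kind. -/
def stirling2 : ℕ → ℕ → ℕ
  | 0, 0 => 1
  | 0, _ + 1 => 0
  | n + 1, k => (if k = 0 then 0 else stirling2 n (k - 1)) + k * stirling2 n k

/-- The board `A` covers the rook configuration of the permutation `π`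
(a rook at `(i, π i)` for every row `i`, zero-indexed). -/
def Covers {n : ℕ} (A : Board) (π : Equiv.Perm (Fin n)) : Prop :=
  ∀ i : Fin n, ((i : ℕ), (π i : ℕ)) ∈ A

/-- `bruhatRank π i j` is the number of rooks of `π` weakly north-east of cell `(i,j)`,
i.e. `|{a ≤ i : π a ≥ j}|`. -/
def bruhatRank {n : ℕ} (π : Equiv.Perm (Fin n)) (i j : Fin n) : ℕ :=
  (Finset.univ.filter fun a : Fin n => a ≤ i ∧ j ≤ π a).card

/-- Bruhat order on the symmetric group, via the standard (Ehresmann) rank criterion. -/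
def BruhatLE {n : ℕ} (u w : Equiv.Perm (Fin n)) : Prop :=
  ∀ i j : Fin n, bruhatRank u i j ≤ bruhatRank w i j


instance {n : ℕ} (A : Board) (π : Equiv.Perm (Fin n)) : Decidable (Covers A π) :=
  inferInstanceAs (Decidable (∀ i : Fin n, ((i : ℕ), (π i : ℕ)) ∈ A))

instance {n : ℕ} (u w : Equiv.Perm (Fin n)) : Decidable (BruhatLE u w) :=
  inferInstanceAs (Decidable (∀ i j : Fin n, bruhatRank u i j ≤ bruhatRank w i j))

/-- The number of inversions of a permutation (= its Coxeter length). -/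
def inversions {n : ℕ} (π : Equiv.Perm (Fin n)) : ℕ :=
  (Finset.univ.filter fun p : Fin n × Fin n => p.1 < p.2 ∧ π p.2 < π p.1).card

/-- A right-aligned Ferrers matrix inside the `n × n` grid: every one-entry has one-entries
(weakly) to its right in the grid and above it. -/
def IsRightFerrers (n : ℕ) (A : Board) : Prop :=
  A ⊆ grid n n ∧ ∀ i j i' j' : ℕ, (i, j) ∈ A → i' ≤ i → j ≤ j' → j' < n → (i', j') ∈ A

/-- A left-aligned Ferrers matrix inside the `n × n` grid. -/
def IsLeftFerrers (n : ℕ) (A : Board) : Prop :=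
  A ⊆ grid n n ∧ ∀ i j i' j' : ℕ, (i, j) ∈ A → i' ≤ i → j' ≤ j → (i', j') ∈ A

/-- A right-aligned skew Ferrers matrix: an entrywise difference `λ - μ` of right-aligned
Ferrers matrices with `μ ≤ λ`. -/
def IsRightSkewFerrers (n : ℕ) (B : Board) : Prop :=
  ∃ L M : Board, IsRightFerrers n L ∧ IsRightFerrers n M ∧ M ⊆ L ∧ B = L \ M

/-- A left-aligned skew Ferrers matrix. -/
def IsLeftSkewFerrers (n : ℕ) (B : Board) : Prop :=
  ∃ L M : Board, IsLeftFerrers n L ∧ IsLeftFerrers n M ∧ M ⊆ L ∧ B = L \ M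

/-- `H` is the right hull of `π`: the smallest right-aligned skew Ferrers matrix covering `π`. -/
def IsRightHull {n : ℕ} (π : Equiv.Perm (Fin n)) (H : Board) : Prop :=
  IsRightSkewFerrers n H ∧ Covers H π ∧
    ∀ B : Board, IsRightSkewFerrers n B → Covers B π → H ⊆ B

/-- `H` is the left hull of `π`: the smallest left-aligned skew Ferrers matrix covering `π`. -/
def IsLeftHull {n : ℕ} (π : Equiv.Perm (Fin n)) (H : Board) : Prop :=
  IsLeftSkewFerrers n H ∧ Covers H π ∧
    ∀ B : Board, IsLeftSkewFerrers n B → Covers B π → H ⊆ B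

/-- `π` contains the pattern `σ`. -/
def ContainsPattern {n m : ℕ} (π : Equiv.Perm (Fin n)) (σ : Equiv.Perm (Fin m)) : Prop :=
  ∃ f : Fin m → Fin n, StrictMono f ∧ ∀ a b : Fin m, σ a < σ b ↔ π (f a) < π (f b)

/-- The pattern 4231 (one-line notation, here zero-indexed). -/
def p4231 : Equiv.Perm (Fin 4) := ⟨![3,1,2,0], ![3,1,2,0], by decide, by decide⟩
/-- The pattern 35142. -/
def p35142 : Equiv.Perm (Fin 5) := ⟨![2,4,0,3,1], ![2,4,0,3,1], by decide, by decide⟩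
/-- The pattern 42513. -/
def p42513 : Equiv.Perm (Fin 5) := ⟨![3,1,4,0,2], ![3,1,4,0,2], by decide, by decide⟩
/-- The pattern 351624. -/
def p351624 : Equiv.Perm (Fin 6) := ⟨![2,4,0,5,1,3], ![2,4,0,5,1,3], by decide, by decide⟩

/-- `π` avoids the four patterns 4231, 35142, 42513 and 351624. -/
def AvoidsThePatterns {n : ℕ} (π : Equiv.Perm (Fin n)) : Prop :=
  ¬ ContainsPattern π p4231 ∧ ¬ ContainsPattern π p35142 ∧
    ¬ ContainsPattern π p42513 ∧ ¬ ContainsPattern π p351624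

/-- Rotating an `m × n` board by 180 degrees. -/
def rot180 (m n : ℕ) (A : Board) : Board := A.image fun c => (m - 1 - c.1, n - 1 - c.2)

/-- Flipping an `m`-row board upside down. -/
def flipud (m : ℕ) (A : Board) : Board := A.image fun c => (m - 1 - c.1, c.2)

/-- The block matrix `B # A` with `B` (of size `nB × nB`) in the top-left corner, `A`
(of size `mA × mA`) in the bottom-right corner, and all-ones off-diagonal blocks. -/
def blockSharp (nB mA : ℕ) (B A : Board) : Board :=
  B ∪ Finset.range nB ×ˢ Finset.Ico nB (nB + mA) ∪ Finset.Ico nB (nB + mA) ×ˢ Finset.range nB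
    ∪ A.image fun c => (c.1 + nB, c.2 + nB)

/-- The 180-degree rotation of a permutation of `Fin n`: `π^↻ (i) = n - 1 - π (n - 1 - i)`. -/
def rot180Perm {n : ℕ} (π : Equiv.Perm (Fin n)) : Equiv.Perm (Fin n) :=
  (Fin.revPerm.trans π).trans Fin.revPerm

/-- The statistic `neg(π) = |{i ∈ [n+1, 2n] : π i ≤ n}|` (one-indexed) on `S_{2n}`. -/
def negStat (n : ℕ) (π : Equiv.Perm (Fin (2 * n))) : ℕ :=
  (Finset.univ.filter fun i : Fin (2 * n) => n ≤ (i : ℕ) ∧ (π i : ℕ) < n).card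

/-- `RB^M (q, t) = Σ_{π ∈ 𝔖ₙᴮ ∩ 𝔖(M)} q^{inv π} t^{neg π}` over rotationally symmetric
permutations of `S_{2n}` covered by the `2n × 2n` board `M`. -/
def RB {F : Type*} [CommSemiring F] (q t : F) (n : ℕ) (M : Board) : F :=
  ∑ π ∈ Finset.univ.filter fun π : Equiv.Perm (Fin (2 * n)) => rot180Perm π = π ∧ Covers M π,
    q ^ inversions π * t ^ negStat n π

/-- The triangular board `T_m` with ones on and above the secondary diagonal. -/
def Tboard (m : ℕ) : Board := (grid m m).filter fun c => c.1 + c.2 < m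

/-- The field `ℚ(q,t)` of rational functions in two variables. -/
noncomputable abbrev QTfield := FractionRing (MvPolynomial (Fin 2) ℚ)
/-- The variable `q` in `ℚ(q,t)`. -/
noncomputable def qvar : QTfield := algebraMap (MvPolynomial (Fin 2) ℚ) _ (MvPolynomial.X 0)
/-- The variable `t` in `ℚ(q,t)`. -/
noncomputable def tvar : QTfield := algebraMap (MvPolynomial (Fin 2) ℚ) _ (MvPolynomial.X 1)

section Mahon

variable {k : ℕ}

/-- insertion of first value `p`. -/
noncomputable def insD (p : Fin (k+1)) (e : Equiv.Perm (Fin k)) : Equiv.Perm (Fin (k+1)) :=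
  Equiv.ofBijective (fun j => Fin.cases p (fun i => p.succAbove (e i)) j) (by
    rw [Fintype.bijective_iff_injective_and_card]
    refine ⟨?_, rfl⟩
    intro a b hab
    induction a using Fin.cases with
    | zero =>
      induction b using Fin.cases with
      | zero => rfl
      | succ i => exact absurd hab.symm (Fin.succAbove_ne p (e i))
    | succ i =>
      induction b using Fin.cases with
      | zero => exact absurd hab (Fin.succAbove_ne p (e i))
      | succ j =>
        simp only [Fin.cases_succ] at hab
        have := e.injective (Fin.succAbove_right_injective hab)
        rw [this])

@[simp] lemma insD_zero (p : Fin (k+1)) (e : Equiv.Perm (Fin k)) : insD p e 0 = p := rfl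

@[simp] lemma insD_succ (p : Fin (k+1)) (e : Equiv.Perm (Fin k)) (i : Fin k) :
    insD p e i.succ = p.succAbove (e i) := rfl

lemma card_val_lt (p : ℕ) (hp : p ≤ k) :
    ((univ : Finset (Fin k)).filter fun v : Fin k => (v : ℕ) < p).card = p := by
  have he : ((univ : Finset (Fin k)).filter fun v : Fin k => (v : ℕ) < p)
      = (Finset.range p).attachFin (fun m hm => lt_of_lt_of_le (Finset.mem_range.mp hm) hp) := by
    ext v
    simp [Finset.mem_attachFin]
  rw [he, Finset.card_attachFin, Finset.card_range]

lemma inversions_insD (p : Fin (k+1)) (e : Equiv.Perm (Fin k)) :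
    inversions (insD p e) = p + inversions e := by
  unfold inversions
  rw [Finset.card_filter, Finset.card_filter, Fintype.sum_prod_type, Fintype.sum_prod_type,
    Fin.sum_univ_succ]
  congr 1
  · -- first row: a = 0
    rw [Fin.sum_univ_succ]
    simp only [insD_zero, insD_succ, lt_self_iff_false, false_and, if_false, zero_add]
    have key : ∀ i : Fin k, (((0 : Fin (k+1)), i.succ).1 < ((0 : Fin (k+1)), i.succ).2 ∧
        p.succAbove (e i) < p) ↔ ((e i : ℕ) < (p : ℕ)) := by
      intro i
      simp only []
      constructor
      · rintro ⟨-, h⟩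
        have := (Fin.succAbove_lt_iff_castSucc_lt p (e i)).mp h
        simpa [Fin.lt_iff_val_lt_val] using this
      · intro h
        refine ⟨Fin.succ_pos i, (Fin.succAbove_lt_iff_castSucc_lt p (e i)).mpr ?_⟩
        simpa [Fin.lt_iff_val_lt_val] using h
    calc (∑ i : Fin k, if ((0 : Fin (k+1)), i.succ).1 < ((0 : Fin (k+1)), i.succ).2 ∧
            p.succAbove (e i) < p then 1 else 0)
        = ∑ i : Fin k, if ((e i : ℕ) < (p : ℕ)) then 1 else 0 := by
          exact Finset.sum_congr rfl fun i _ => by rw [if_congr (key i) rfl rfl]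
      _ = ∑ v : Fin k, if ((v : ℕ) < (p : ℕ)) then 1 else 0 :=
          Equiv.sum_comp e (fun v => if ((v : ℕ) < (p : ℕ)) then 1 else 0)
      _ = (p : ℕ) := by rw [← Finset.card_filter, card_val_lt _ (Fin.is_le p)]
  · -- remaining rows
    calc (∑ a : Fin k, ∑ b : Fin (k+1),
          if (a.succ, b).1 < (a.succ, b).2 ∧ insD p e b < insD p e a.succ then 1 else 0)
        = ∑ a : Fin k, ∑ b : Fin k, if (a, b).1 < (a, b).2 ∧ e b < e a then 1 else 0 := by
          refine Finset.sum_congr rfl fun a _ => ?_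
          rw [Fin.sum_univ_succ]
          have hz : ¬ ((a.succ, (0 : Fin (k+1))).1 < (a.succ, (0 : Fin (k+1))).2 ∧
              insD p e 0 < insD p e a.succ) := by
            rintro ⟨h, -⟩
            exact absurd h (by simp [Fin.lt_iff_val_lt_val])
          rw [if_neg hz, zero_add]
          refine Finset.sum_congr rfl fun b _ => ?_
          congr 1
          simp only [insD_succ, eq_iff_iff]
          constructor
          · rintro ⟨h1, h2⟩
            exact ⟨Fin.succ_lt_succ_iff.mp h1, (Fin.succAbove_lt_succAbove_iff (p := p)).mp h2⟩
          · rintro ⟨h1, h2⟩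
            exact ⟨Fin.succ_lt_succ_iff.mpr h1, (Fin.succAbove_lt_succAbove_iff (p := p)).mpr h2⟩


lemma sum_pow_inversions {F : Type*} [CommSemiring F] (x : F) (k : ℕ) :
    ∑ σ : Equiv.Perm (Fin k), x ^ inversions σ = qFact x k := by
  induction k with
  | zero => simp [qFact, inversions]
  | succ k ih =>
    have hbij : Function.Bijective (fun pe : Fin (k+1) × Equiv.Perm (Fin k) => insD pe.1 pe.2) := by
      rw [Fintype.bijective_iff_injective_and_card]
      constructor
      · rintro ⟨p, e⟩ ⟨p', e'⟩ h
        have hp : p = p' := by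
          have := congrArg (fun σ : Equiv.Perm (Fin (k+1)) => σ 0) h
          simpa using this
        subst hp
        have he : e = e' := by
          refine Equiv.ext fun i => ?_
          have := congrArg (fun σ : Equiv.Perm (Fin (k+1)) => σ i.succ) h
          simp only [insD_succ] at this
          exact Fin.succAbove_right_injective this
        rw [he]
      · simp [Fintype.card_perm, Nat.factorial_succ]
    rw [← Fintype.sum_bijective _ hbij (fun pe => x ^ inversions (insD pe.1 pe.2)) _
        (fun pe => rfl)]
    rw [Fintype.sum_prod_type]
    simp only [inversions_insD, pow_add]
    rw [← Finset.sum_mul_sum]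
    rw [ih]
    have hq : qFact x (k+1) = qFact x k * qInt x (k+1) := Finset.prod_range_succ _ k
    rw [hq, mul_comm]
    congr 1
    rw [qInt, ← Fin.sum_univ_eq_sum_range]

end Mahon

section Boards

/-- rows of a board -/
def rowsOf (C : Board) : Finset ℕ := C.image Prod.fst
def colsOf (C : Board) : Finset ℕ := C.image Prod.snd
/-- the column of the unique rook in row `j` (junk value if no or several rooks) -/
def colOf (C : Board) (j : ℕ) : ℕ := (C.filter fun c => c.1 = j).sum Prod.snd
def rowOf (C : Board) (j : ℕ) : ℕ := (C.filter fun c => c.2 = j).sum Prod.fst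
def Sset (n : ℕ) (C : Board) : Finset ℕ := Finset.range n \ rowsOf C
def Tset (n : ℕ) (C : Board) : Finset ℕ := Finset.range n \ (C.image fun c => n - 1 - c.2)

lemma mem_grid {m n : ℕ} {c : ℕ × ℕ} : c ∈ grid m n ↔ c.1 < m ∧ c.2 < n := by
  simp [grid]

variable {n k : ℕ} {C : Board}

/-- rook condition -/
def Rook (C : Board) : Prop := ∀ c ∈ C, ∀ c' ∈ C, c ≠ c' → c.1 ≠ c'.1 ∧ c.2 ≠ c'.2

lemma mem_rowsOf {j : ℕ} : j ∈ rowsOf C ↔ ∃ c ∈ C, c.1 = j := by simp [rowsOf]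

lemma mem_colsOf {j : ℕ} : j ∈ colsOf C ↔ ∃ c ∈ C, c.2 = j := by simp [colsOf]

lemma colOf_eq (hrook : Rook C) {p : ℕ × ℕ} (hp : p ∈ C) : colOf C p.1 = p.2 := by
  have hfe : C.filter (fun c => c.1 = p.1) = {p} := by
    ext c
    simp only [Finset.mem_filter, Finset.mem_singleton]
    constructor
    · rintro ⟨hc, hc1⟩
      by_contra hne
      exact (hrook c hc p hp hne).1 hc1
    · rintro rfl; exact ⟨hp, rfl⟩
  rw [colOf, hfe, Finset.sum_singleton]

lemma rowOf_eq (hrook : Rook C) {p : ℕ × ℕ} (hp : p ∈ C) : rowOf C p.2 = p.1 := by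
  have hfe : C.filter (fun c => c.2 = p.2) = {p} := by
    ext c
    simp only [Finset.mem_filter, Finset.mem_singleton]
    constructor
    · rintro ⟨hc, hc2⟩
      by_contra hne
      exact (hrook c hc p hp hne).2 hc2
    · rintro rfl; exact ⟨hp, rfl⟩
  rw [rowOf, hfe, Finset.sum_singleton]

lemma rook_mem_of_mem_rowsOf (hrook : Rook C) {j : ℕ} (hj : j ∈ rowsOf C) :
    (j, colOf C j) ∈ C := by
  obtain ⟨c, hc, hcj⟩ := mem_rowsOf.mp hj
  have : colOf C j = c.2 := by rw [← hcj]; exact colOf_eq hrook hc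
  rw [this, ← hcj]; exact hc

lemma rook_mem_of_mem_colsOf (hrook : Rook C) {j : ℕ} (hj : j ∈ colsOf C) :
    (rowOf C j, j) ∈ C := by
  obtain ⟨c, hc, hcj⟩ := mem_colsOf.mp hj
  have : rowOf C j = c.1 := by rw [← hcj]; exact rowOf_eq hrook hc
  rw [this, ← hcj]; exact hc

lemma card_rowsOf (hrook : Rook C) : (rowsOf C).card = C.card := by
  rw [rowsOf, Finset.card_image_of_injOn]
  intro c hc c' hc' h
  by_contra hne
  exact (hrook c hc c' hc' hne).1 h

lemma card_colsOf (hrook : Rook C) : (colsOf C).card = C.card := by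
  rw [colsOf, Finset.card_image_of_injOn]
  intro c hc c' hc' h
  by_contra hne
  exact (hrook c hc c' hc' hne).2 h

lemma rowsOf_subset (hCg : C ⊆ grid n n) : rowsOf C ⊆ Finset.range n := by
  intro j hj
  obtain ⟨c, hc, hcj⟩ := mem_rowsOf.mp hj
  rw [Finset.mem_range, ← hcj]
  exact (mem_grid.mp (hCg hc)).1

lemma colsOf_subset (hCg : C ⊆ grid n n) : colsOf C ⊆ Finset.range n := by
  intro j hj
  obtain ⟨c, hc, hcj⟩ := mem_colsOf.mp hj
  rw [Finset.mem_range, ← hcj]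
  exact (mem_grid.mp (hCg hc)).2

lemma card_Sset (hkn : k ≤ n) (hCg : C ⊆ grid n n) (hrook : Rook C) (hcard : C.card = n - k) :
    (Sset n C).card = k := by
  rw [Sset, Finset.card_sdiff_of_subset (rowsOf_subset hCg), Finset.card_range, card_rowsOf hrook, hcard]
  omega

lemma card_Tset (hkn : k ≤ n) (hCg : C ⊆ grid n n) (hrook : Rook C) (hcard : C.card = n - k) :
    (Tset n C).card = k := by
  have himg : (C.image fun c => n - 1 - c.2).card = C.card := by
    rw [Finset.card_image_of_injOn]
    intro c hc c' hc' h
    have h' : n - 1 - c.2 = n - 1 - c'.2 := h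
    have h1 := (mem_grid.mp (hCg hc)).2
    have h2 := (mem_grid.mp (hCg hc')).2
    have h3 : c.2 = c'.2 := by omega
    by_contra hne
    exact (hrook c hc c' hc' hne).2 h3
  have hsub : (C.image fun c => n - 1 - c.2) ⊆ Finset.range n := by
    intro j hj
    obtain ⟨c, hc, hcj⟩ := Finset.mem_image.mp hj
    have := (mem_grid.mp (hCg hc)).2
    rw [Finset.mem_range, ← hcj]
    omega
  rw [Tset, Finset.card_sdiff_of_subset hsub, Finset.card_range, himg, hcard]
  omega

lemma mem_Sset {j : ℕ} : j ∈ Sset n C ↔ j < n ∧ j ∉ rowsOf C := by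
  simp [Sset]

lemma mem_Tset {j : ℕ} : j ∈ Tset n C ↔ j < n ∧ ∀ c ∈ C, n - 1 - c.2 ≠ j := by
  simp [Tset]

end Boards

section Construction

variable (n k : ℕ) (C : Board) (σ : Equiv.Perm (Fin k))
  (hS : (Sset n C).card = k) (hT : (Tset n C).card = k)

/-- the matching of left-mapping bottom rows to their columns -/
noncomputable def tauF (j : ℕ) : ℕ :=
  if h : j ∈ Sset n C then
    (((Tset n C).orderIsoOfFin hT) (σ (((Sset n C).orderIsoOfFin hS).symm ⟨j, h⟩)) : ℕ)
  else 0

/-- the inverse matching -/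
noncomputable def tauInv (t : ℕ) : ℕ :=
  if h : t ∈ Tset n C then
    ((((Sset n C).orderIsoOfFin hS)) (σ.symm (((Tset n C).orderIsoOfFin hT).symm ⟨t, h⟩)) : ℕ)
  else 0

/-- the bottom half of the big permutation, in local coordinates -/
noncomputable def botF (j : ℕ) : ℕ :=
  if j ∈ rowsOf C then n + colOf C j else tauF n k C σ hS hT j

/-- the big permutation, as a function on `[0, 2n)` -/
noncomputable def bigF (i : ℕ) : ℕ :=
  if i < n then 2*n - 1 - botF n k C σ hS hT (n - 1 - i) else botF n k C σ hS hT (i - n)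

variable {n k C σ}

lemma tauF_mem {j : ℕ} (hj : j ∈ Sset n C) : tauF n k C σ hS hT j ∈ Tset n C := by
  rw [tauF, dif_pos hj]
  exact (((Tset n C).orderIsoOfFin hT) _).2

lemma tauInv_mem {t : ℕ} (ht : t ∈ Tset n C) : tauInv n k C σ hS hT t ∈ Sset n C := by
  rw [tauInv, dif_pos ht]
  exact (((Sset n C).orderIsoOfFin hS) _).2

lemma tauInv_tauF {j : ℕ} (hj : j ∈ Sset n C) :
    tauInv n k C σ hS hT (tauF n k C σ hS hT j) = j := by
  rw [tauF, dif_pos hj, tauInv, dif_pos (by exact (((Tset n C).orderIsoOfFin hT) _).2),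
    Subtype.coe_eta]
  simp

lemma tauF_tauInv {t : ℕ} (ht : t ∈ Tset n C) :
    tauF n k C σ hS hT (tauInv n k C σ hS hT t) = t := by
  rw [tauInv, dif_pos ht, tauF, dif_pos (by exact (((Sset n C).orderIsoOfFin hS) _).2),
    Subtype.coe_eta]
  simp

lemma tauF_lt {j : ℕ} (hj : j ∈ Sset n C) : tauF n k C σ hS hT j < n :=
  (mem_Tset.mp (tauF_mem hS hT hj)).1

end Construction

section MainConstr

variable {n k : ℕ} {C : Board} {σ : Equiv.Perm (Fin k)}
  (hS : (Sset n C).card = k) (hT : (Tset n C).card = k)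
  (hCg : C ⊆ grid n n) (hrook : Rook C)

include hCg hrook in
lemma colOf_lt {j : ℕ} (hj : j ∈ rowsOf C) : colOf C j < n :=
  (mem_grid.mp (hCg (rook_mem_of_mem_rowsOf hrook hj))).2

include hCg hrook in
lemma botF_lt {j : ℕ} (hj : j < n) : botF n k C σ hS hT j < 2*n := by
  rw [botF]
  by_cases h : j ∈ rowsOf C
  · rw [if_pos h]
    have := colOf_lt hCg hrook h
    omega
  · rw [if_neg h]
    have := tauF_lt (σ := σ) hS hT (mem_Sset.mpr ⟨hj, h⟩)
    omega

lemma n_le_botF_iff {j : ℕ} (hj : j < n) :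
    n ≤ botF n k C σ hS hT j ↔ j ∈ rowsOf C := by
  rw [botF]
  by_cases h : j ∈ rowsOf C
  · rw [if_pos h]; simp [h]
  · rw [if_neg h]
    have := tauF_lt (σ := σ) hS hT (mem_Sset.mpr ⟨hj, h⟩)
    simp [h]; omega

lemma botF_of_S {j : ℕ} (hj : j ∈ Sset n C) :
    botF n k C σ hS hT j = tauF n k C σ hS hT j := if_neg (mem_Sset.mp hj).2

lemma botF_of_R {j : ℕ} (hj : j ∈ rowsOf C) :
    botF n k C σ hS hT j = n + colOf C j := if_pos hj

include hrook in
lemma botF_inj {j j' : ℕ} (hj : j < n) (hj' : j' < n)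
    (h : botF n k C σ hS hT j = botF n k C σ hS hT j') : j = j' := by
  by_cases h1 : j ∈ rowsOf C <;> by_cases h2 : j' ∈ rowsOf C
  · rw [botF_of_R hS hT h1, botF_of_R hS hT h2] at h
    have hc : colOf C j = colOf C j' := by omega
    by_contra hne
    have hr1 := rook_mem_of_mem_rowsOf hrook h1
    have hr2 := rook_mem_of_mem_rowsOf hrook h2
    exact (hrook _ hr1 _ hr2 (by simp [hne])).2 (by simpa using hc)
  · exfalso
    have ha := (n_le_botF_iff (σ := σ) hS hT hj).mpr h1
    have hb := (n_le_botF_iff (σ := σ) hS hT hj').not.mpr h2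
    omega
  · exfalso
    have ha := (n_le_botF_iff (σ := σ) hS hT hj).not.mpr h1
    have hb := (n_le_botF_iff (σ := σ) hS hT hj').mpr h2
    omega
  · have hs1 : j ∈ Sset n C := mem_Sset.mpr ⟨hj, h1⟩
    have hs2 : j' ∈ Sset n C := mem_Sset.mpr ⟨hj', h2⟩
    rw [botF_of_S hS hT hs1, botF_of_S hS hT hs2] at h
    have := congrArg (tauInv n k C σ hS hT) h
    rwa [tauInv_tauF hS hT hs1, tauInv_tauF hS hT hs2] at this

include hCg hrook in
lemma botF_sum_ne {j j' : ℕ} (hj : j < n) (hj' : j' < n) :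
    botF n k C σ hS hT j + botF n k C σ hS hT j' ≠ 2*n - 1 := by
  by_cases h1 : j ∈ rowsOf C <;> by_cases h2 : j' ∈ rowsOf C
  · rw [botF_of_R hS hT h1, botF_of_R hS hT h2]; omega
  · rw [botF_of_R hS hT h1, botF_of_S hS hT (mem_Sset.mpr ⟨hj', h2⟩)]
    have hcl := colOf_lt hCg hrook h1
    have htl := tauF_lt (σ := σ) hS hT (mem_Sset.mpr ⟨hj', h2⟩)
    have htm := tauF_mem (σ := σ) hS hT (mem_Sset.mpr ⟨hj', h2⟩)
    have hforb := (mem_Tset.mp htm).2 _ (rook_mem_of_mem_rowsOf hrook h1)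
    intro hcon
    exact hforb (by omega)
  · rw [botF_of_S hS hT (mem_Sset.mpr ⟨hj, h1⟩), botF_of_R hS hT h2]
    have hcl := colOf_lt hCg hrook h2
    have htl := tauF_lt (σ := σ) hS hT (mem_Sset.mpr ⟨hj, h1⟩)
    have htm := tauF_mem (σ := σ) hS hT (mem_Sset.mpr ⟨hj, h1⟩)
    have hforb := (mem_Tset.mp htm).2 _ (rook_mem_of_mem_rowsOf hrook h2)
    intro hcon
    exact hforb (by omega)
  · rw [botF_of_S hS hT (mem_Sset.mpr ⟨hj, h1⟩), botF_of_S hS hT (mem_Sset.mpr ⟨hj', h2⟩)]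
    have ha := tauF_lt (σ := σ) hS hT (mem_Sset.mpr ⟨hj, h1⟩)
    have hb := tauF_lt (σ := σ) hS hT (mem_Sset.mpr ⟨hj', h2⟩)
    omega

lemma bigF_bot {i : ℕ} (h : n ≤ i) :
    bigF n k C σ hS hT i = botF n k C σ hS hT (i - n) := if_neg (by omega)

lemma bigF_top {i : ℕ} (h : i < n) :
    bigF n k C σ hS hT i = 2*n - 1 - botF n k C σ hS hT (n - 1 - i) := if_pos h

include hCg hrook in
lemma bigF_lt {i : ℕ} (h : i < 2*n) : bigF n k C σ hS hT i < 2*n := by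
  by_cases hi : i < n
  · rw [bigF_top hS hT hi]; omega
  · rw [bigF_bot hS hT (by omega)]
    exact botF_lt hS hT hCg hrook (by omega)

include hCg hrook in
lemma bigF_symm {i : ℕ} (h : i < 2*n) :
    bigF n k C σ hS hT (2*n - 1 - i) = 2*n - 1 - bigF n k C σ hS hT i := by
  by_cases hi : i < n
  · rw [bigF_bot hS hT (by omega), bigF_top hS hT hi]
    have hb := botF_lt (σ := σ) hS hT hCg hrook (j := n - 1 - i) (by omega)
    have he : 2*n - 1 - i - n = n - 1 - i := by omega
    rw [he]
    omega
  · rw [bigF_top hS hT (by omega), bigF_bot hS hT (by omega)]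
    congr 2
    omega

include hCg hrook in
lemma bigF_inj {i j : ℕ} (hi : i < 2*n) (hj : j < 2*n)
    (h : bigF n k C σ hS hT i = bigF n k C σ hS hT j) : i = j := by
  by_cases h1 : i < n <;> by_cases h2 : j < n
  · rw [bigF_top hS hT h1, bigF_top hS hT h2] at h
    have ha := botF_lt (σ := σ) hS hT hCg hrook (j := n - 1 - i) (by omega)
    have hb := botF_lt (σ := σ) hS hT hCg hrook (j := n - 1 - j) (by omega)
    have he : botF n k C σ hS hT (n - 1 - i) = botF n k C σ hS hT (n - 1 - j) := by omega
    have := botF_inj hS hT hrook (by omega) (by omega) he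
    omega
  · exfalso
    rw [bigF_top hS hT h1, bigF_bot hS hT (by omega)] at h
    have ha := botF_lt (σ := σ) hS hT hCg hrook (j := n - 1 - i) (by omega)
    exact botF_sum_ne (σ := σ) hS hT hCg hrook (j := j - n) (j' := n - 1 - i)
      (by omega) (by omega) (by omega)
  · exfalso
    rw [bigF_bot hS hT (by omega), bigF_top hS hT h2] at h
    have ha := botF_lt (σ := σ) hS hT hCg hrook (j := n - 1 - j) (by omega)
    exact botF_sum_ne (σ := σ) hS hT hCg hrook (j := i - n) (j' := n - 1 - j)
      (by omega) (by omega) (by omega)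
  · rw [bigF_bot hS hT (by omega), bigF_bot hS hT (by omega)] at h
    have := botF_inj hS hT hrook (j := i - n) (j' := j - n) (by omega) (by omega) h
    omega

variable (σ) in
/-- the symmetric permutation associated to the data `(k, C, σ)` -/
noncomputable def PiPerm : Equiv.Perm (Fin (2*n)) :=
  Equiv.ofBijective
    (fun i => ⟨bigF n k C σ hS hT i, bigF_lt hS hT hCg hrook i.2⟩)
    (Finite.injective_iff_bijective.mp (fun i j hij =>
      Fin.ext (bigF_inj hS hT hCg hrook i.2 j.2 (congrArg Fin.val hij))))

@[simp] lemma PiPerm_apply (i : Fin (2*n)) :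
    (PiPerm σ hS hT hCg hrook i : ℕ) = bigF n k C σ hS hT i := rfl

lemma PiPerm_symmetric : rot180Perm (PiPerm σ hS hT hCg hrook) = PiPerm σ hS hT hCg hrook := by
  refine Equiv.ext fun i => Fin.ext ?_
  have hi : (i : ℕ) < 2*n := i.2
  have hb := bigF_lt (σ := σ) hS hT hCg hrook hi
  calc ((rot180Perm (PiPerm σ hS hT hCg hrook)) i : ℕ)
      = 2*n - 1 - bigF n k C σ hS hT (2*n - 1 - i) := by
        simp only [rot180Perm, Equiv.trans_apply, Fin.revPerm_apply, Fin.val_rev,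
          PiPerm_apply]
        have hrv : 2*n - ((i : ℕ) + 1) = 2*n - 1 - i := by omega
        rw [hrv]
        have h2 := bigF_lt (σ := σ) hS hT hCg hrook (i := 2*n - 1 - i) (by omega)
        omega
    _ = bigF n k C σ hS hT i := by
        rw [bigF_symm hS hT hCg hrook hi]
        omega

lemma negStat_PiPerm : negStat n (PiPerm σ hS hT hCg hrook) = k := by
  rw [negStat]
  refine Eq.trans ?_ hS
  refine Finset.card_bij' (fun i _ => (i : ℕ) - n)
    (fun s hs => (⟨s + n, by
      have := (mem_Sset.mp hs).1; omega⟩ : Fin (2*n))) ?_ ?_ ?_ ?_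
  · intro i hi
    show ((i : ℕ) - n) ∈ Sset n C
    simp only [Finset.mem_filter_univ, Finset.mem_filter, Finset.mem_univ, true_and, PiPerm_apply] at hi
    obtain ⟨h1, h2⟩ := (Finset.mem_filter.mp hi).2
    rw [bigF_bot hS hT h1] at h2
    refine mem_Sset.mpr ⟨by have := i.2; omega, ?_⟩
    intro hr
    have := (n_le_botF_iff (σ := σ) hS hT (j := (i:ℕ) - n) (by have := i.2; omega)).mpr hr
    omega
  · intro s hs
    simp only [Finset.mem_filter_univ, Finset.mem_filter, Finset.mem_univ, true_and, PiPerm_apply]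
    have hsn := (mem_Sset.mp hs).1
    refine Finset.mem_filter.mpr ⟨Finset.mem_univ _, ?_⟩
    constructor
    · simp
    · have he : bigF n k C σ hS hT ((⟨s + n, by omega⟩ : Fin (2*n)) : ℕ) =
        botF n k C σ hS hT s := by
        rw [bigF_bot hS hT (by simp)]
        congr 1
        simp
      rw [he, botF_of_S hS hT hs]
      exact tauF_lt hS hT hs
  · intro i hi
    simp only [Finset.mem_filter] at hi
    exact Fin.ext (by simp; omega)
  · intro s hs
    have hsn := (mem_Sset.mp hs).1
    simp

end MainConstr

section CoversSec

variable {n k : ℕ} {C A : Board} {σ : Equiv.Perm (Fin k)}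
  (hS : (Sset n C).card = k) (hT : (Tset n C).card = k)
  (hCg : C ⊆ grid n n) (hrook : Rook C)

include hrook in
lemma PiPerm_covers (hCA : C ⊆ A) (hA : A ⊆ grid n n) :
    Covers (blockSharp n n (rot180 n n A) A) (PiPerm σ hS hT hCg hrook) := by
  intro i
  have hi2 : (i : ℕ) < 2*n := i.2
  rw [blockSharp]
  simp only [Finset.mem_union]
  by_cases hi : (i : ℕ) < n
  · -- top rows
    by_cases hr : (n - 1 - (i:ℕ)) ∈ rowsOf C
    · left; left; left
      rw [rot180]
      have hp := rook_mem_of_mem_rowsOf hrook hr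
      have hpA := hCA hp
      have hc := (mem_grid.mp (hCg hp)).2
      refine Finset.mem_image.mpr ⟨_, hpA, ?_⟩
      have hval : ((PiPerm σ hS hT hCg hrook) i : ℕ) = n - 1 - colOf C (n - 1 - (i:ℕ)) := by
        rw [PiPerm_apply, bigF_top hS hT hi, botF_of_R hS hT hr]
        omega
      rw [hval]
      simp only [Prod.mk.injEq]
      exact ⟨by omega, trivial⟩
    · left; left; right
      have hsm : (n - 1 - (i:ℕ)) ∈ Sset n C := mem_Sset.mpr ⟨by omega, hr⟩
      have hval : ((PiPerm σ hS hT hCg hrook) i : ℕ) =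
          2*n - 1 - tauF n k C σ hS hT (n - 1 - (i:ℕ)) := by
        rw [PiPerm_apply, bigF_top hS hT hi, botF_of_S hS hT hsm]
      have htl := tauF_lt (σ := σ) hS hT hsm
      simp only [Finset.mem_product, Finset.mem_range, Finset.mem_Ico]
      exact ⟨hi, by omega⟩
  · -- bottom rows
    by_cases hr : ((i:ℕ) - n) ∈ rowsOf C
    · right
      have hp := rook_mem_of_mem_rowsOf hrook hr
      refine Finset.mem_image.mpr ⟨_, hCA hp, ?_⟩
      have hval : ((PiPerm σ hS hT hCg hrook) i : ℕ) = n + colOf C ((i:ℕ) - n) := by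
        rw [PiPerm_apply, bigF_bot hS hT (by omega), botF_of_R hS hT hr]
      rw [hval]
      simp only [Prod.mk.injEq]
      exact ⟨by omega, by omega⟩
    · left; right
      have hsm : ((i:ℕ) - n) ∈ Sset n C := mem_Sset.mpr ⟨by omega, hr⟩
      have hval : ((PiPerm σ hS hT hCg hrook) i : ℕ) =
          tauF n k C σ hS hT ((i:ℕ) - n) := by
        rw [PiPerm_apply, bigF_bot hS hT (by omega), botF_of_S hS hT hsm]
      have htl := tauF_lt (σ := σ) hS hT hsm
      simp only [Finset.mem_product, Finset.mem_range, Finset.mem_Ico]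
      exact ⟨⟨by omega, by omega⟩, by omega⟩

end CoversSec

/-- inversion pairs among the rooks -/
def ICCset (C : Board) : Finset ((ℕ×ℕ)×(ℕ×ℕ)) :=
  (C ×ˢ C).filter fun pp => pp.1.1 < pp.2.1 ∧ pp.2.2 < pp.1.2
def IRLset (n : ℕ) (C : Board) : Finset ((ℕ×ℕ)×ℕ) :=
  (C ×ˢ Sset n C).filter fun ps => ps.1.1 < ps.2
def IXset (n : ℕ) (C : Board) : Finset ((ℕ×ℕ)×ℕ) :=
  (C ×ˢ Tset n C).filter fun pt => pt.1.2 + pt.2 + 2 ≤ n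
def IXcset (n : ℕ) (C : Board) : Finset ((ℕ×ℕ)×ℕ) :=
  (C ×ˢ (Finset.range n \ colsOf C)).filter fun pt => pt.1.2 < pt.2

section CountSec

variable {n k : ℕ} {C : Board} {σ : Equiv.Perm (Fin k)}
  (hS : (Sset n C).card = k) (hT : (Tset n C).card = k)
  (hCg : C ⊆ grid n n) (hrook : Rook C)

lemma tauF_apply {j : ℕ} (hj : j ∈ Sset n C) :
    tauF n k C σ hS hT j =
      (((Tset n C).orderIsoOfFin hT) (σ (((Sset n C).orderIsoOfFin hS).symm ⟨j, hj⟩)) : ℕ) :=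
  dif_pos hj

lemma tauF_sIso (a : Fin k) :
    tauF n k C σ hS hT (((Sset n C).orderIsoOfFin hS a : ℕ)) =
      (((Tset n C).orderIsoOfFin hT) (σ a) : ℕ) := by
  rw [tauF_apply hS hT (((Sset n C).orderIsoOfFin hS) a).2, Subtype.coe_eta,
    ((Sset n C).orderIsoOfFin hS).symm_apply_apply a]

lemma sIso_lt_sIso {a b : Fin k} :
    (((Sset n C).orderIsoOfFin hS) a : ℕ) < (((Sset n C).orderIsoOfFin hS) b : ℕ) ↔ a < b := by
  exact Subtype.coe_lt_coe.trans ((Sset n C).orderIsoOfFin hS).lt_iff_lt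

lemma tIso_lt_tIso {a b : Fin k} :
    (((Tset n C).orderIsoOfFin hT) a : ℕ) < (((Tset n C).orderIsoOfFin hT) b : ℕ) ↔ a < b := by
  exact Subtype.coe_lt_coe.trans ((Tset n C).orderIsoOfFin hT).lt_iff_lt

include hCg hrook in
lemma card_botinv :
    ((grid n n).filter fun r =>
        r.1 < r.2 ∧ botF n k C σ hS hT r.2 < botF n k C σ hS hT r.1).card
      = (ICCset C).card + (IRLset n C).card + inversions σ := by
  set s := (grid n n).filter fun r =>
    r.1 < r.2 ∧ botF n k C σ hS hT r.2 < botF n k C σ hS hT r.1 with hs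
  have e1 : (s.filter fun r => r.1 ∈ rowsOf C).card
      + (s.filter fun r => ¬ r.1 ∈ rowsOf C).card = s.card :=
    Finset.card_filter_add_card_filter_not _
  have e2 : ((s.filter fun r => r.1 ∈ rowsOf C).filter fun r => r.2 ∈ rowsOf C).card
      + ((s.filter fun r => r.1 ∈ rowsOf C).filter fun r => ¬ r.2 ∈ rowsOf C).card
      = (s.filter fun r => r.1 ∈ rowsOf C).card :=
    Finset.card_filter_add_card_filter_not _
  have e3 : ((s.filter fun r => ¬ r.1 ∈ rowsOf C).filter fun r => r.2 ∈ rowsOf C).card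
      + ((s.filter fun r => ¬ r.1 ∈ rowsOf C).filter fun r => ¬ r.2 ∈ rowsOf C).card
      = (s.filter fun r => ¬ r.1 ∈ rowsOf C).card :=
    Finset.card_filter_add_card_filter_not _
  have h11 : ((s.filter fun r => r.1 ∈ rowsOf C).filter fun r => r.2 ∈ rowsOf C).card
      = (ICCset C).card := by
    refine Finset.card_bij' (fun r _ => ((r.1, colOf C r.1), (r.2, colOf C r.2)))
      (fun pp _ => (pp.1.1, pp.2.1)) ?_ ?_ ?_ ?_
    · intro r hr
      simp only [hs, Finset.mem_filter, mem_grid] at hr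
      obtain ⟨⟨⟨⟨hr1, hr2⟩, hlt, hbot⟩, hm1⟩, hm2⟩ := hr
      rw [botF_of_R hS hT hm1, botF_of_R hS hT hm2] at hbot
      simp only [ICCset, Finset.mem_filter, Finset.mem_product]
      exact ⟨⟨rook_mem_of_mem_rowsOf hrook hm1, rook_mem_of_mem_rowsOf hrook hm2⟩,
        hlt, by omega⟩
    · intro pp hpp
      simp only [ICCset, Finset.mem_filter, Finset.mem_product] at hpp
      obtain ⟨⟨hp1, hp2⟩, hlt, hcol⟩ := hpp
      have hg1 := mem_grid.mp (hCg hp1)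
      have hg2 := mem_grid.mp (hCg hp2)
      have hr1 : pp.1.1 ∈ rowsOf C := mem_rowsOf.mpr ⟨pp.1, hp1, rfl⟩
      have hr2 : pp.2.1 ∈ rowsOf C := mem_rowsOf.mpr ⟨pp.2, hp2, rfl⟩
      simp only [hs, Finset.mem_filter, mem_grid]
      refine ⟨⟨⟨⟨hg1.1, hg2.1⟩, hlt, ?_⟩, hr1⟩, hr2⟩
      rw [botF_of_R hS hT hr1, botF_of_R hS hT hr2,
        colOf_eq hrook hp1, colOf_eq hrook hp2]
      omega
    · intro r _; rfl
    · intro pp hpp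
      simp only [ICCset, Finset.mem_filter, Finset.mem_product] at hpp
      obtain ⟨⟨hp1, hp2⟩, -, -⟩ := hpp
      have c1 := colOf_eq hrook hp1
      have c2 := colOf_eq hrook hp2
      simp only []
      rw [c1, c2]
  have h10 : ((s.filter fun r => r.1 ∈ rowsOf C).filter fun r => ¬ r.2 ∈ rowsOf C).card
      = (IRLset n C).card := by
    refine Finset.card_bij' (fun r _ => ((r.1, colOf C r.1), r.2))
      (fun ps _ => (ps.1.1, ps.2)) ?_ ?_ ?_ ?_
    · intro r hr
      simp only [hs, Finset.mem_filter, mem_grid] at hr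
      obtain ⟨⟨⟨⟨hr1, hr2⟩, hlt, hbot⟩, hm1⟩, hm2⟩ := hr
      simp only [IRLset, Finset.mem_filter, Finset.mem_product]
      exact ⟨⟨rook_mem_of_mem_rowsOf hrook hm1, mem_Sset.mpr ⟨hr2, hm2⟩⟩, hlt⟩
    · intro ps hps
      simp only [IRLset, Finset.mem_filter, Finset.mem_product] at hps
      obtain ⟨⟨hp1, hp2⟩, hlt⟩ := hps
      have hg1 := mem_grid.mp (hCg hp1)
      have hr1 : ps.1.1 ∈ rowsOf C := mem_rowsOf.mpr ⟨ps.1, hp1, rfl⟩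
      have hsm := mem_Sset.mp hp2
      simp only [hs, Finset.mem_filter, mem_grid]
      refine ⟨⟨⟨⟨hg1.1, hsm.1⟩, hlt, ?_⟩, hr1⟩, hsm.2⟩
      rw [botF_of_R hS hT hr1, botF_of_S hS hT hp2]
      have := tauF_lt (σ := σ) hS hT hp2
      omega
    · intro r _; rfl
    · intro ps hps
      simp only [IRLset, Finset.mem_filter, Finset.mem_product] at hps
      obtain ⟨⟨hp1, -⟩, -⟩ := hps
      have c1 := colOf_eq hrook hp1
      simp only []
      rw [c1]
  have h01 : ((s.filter fun r => ¬ r.1 ∈ rowsOf C).filter fun r => r.2 ∈ rowsOf C).card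
      = 0 := by
    rw [Finset.card_eq_zero, Finset.eq_empty_iff_forall_notMem]
    intro r hr
    simp only [hs, Finset.mem_filter, mem_grid] at hr
    obtain ⟨⟨⟨⟨hr1, hr2⟩, hlt, hbot⟩, hm1⟩, hm2⟩ := hr
    rw [botF_of_S hS hT (mem_Sset.mpr ⟨hr1, hm1⟩), botF_of_R hS hT hm2] at hbot
    have := tauF_lt (σ := σ) hS hT (mem_Sset.mpr ⟨hr1, hm1⟩)
    omega
  have h00 : ((s.filter fun r => ¬ r.1 ∈ rowsOf C).filter fun r => ¬ r.2 ∈ rowsOf C).card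
      = inversions σ := by
    rw [inversions]
    refine Finset.card_bij'
      (fun r hr => ((((Sset n C).orderIsoOfFin hS).symm
          ⟨r.1, by
            simp only [hs, Finset.mem_filter, mem_grid] at hr
            exact mem_Sset.mpr ⟨hr.1.1.1.1, hr.1.2⟩⟩),
        (((Sset n C).orderIsoOfFin hS).symm
          ⟨r.2, by
            simp only [hs, Finset.mem_filter, mem_grid] at hr
            exact mem_Sset.mpr ⟨hr.1.1.1.2, hr.2⟩⟩)))
      (fun q _ => ((((Sset n C).orderIsoOfFin hS) q.1 : ℕ),
        (((Sset n C).orderIsoOfFin hS) q.2 : ℕ))) ?_ ?_ ?_ ?_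
    · intro r hr
      simp only [hs, Finset.mem_filter, mem_grid] at hr
      obtain ⟨⟨⟨⟨hr1, hr2⟩, hlt, hbot⟩, hm1⟩, hm2⟩ := hr
      have hs1 : r.1 ∈ Sset n C := mem_Sset.mpr ⟨hr1, hm1⟩
      have hs2 : r.2 ∈ Sset n C := mem_Sset.mpr ⟨hr2, hm2⟩
      simp only [Finset.mem_filter, Finset.mem_univ, true_and]
      constructor
      · rw [← ((Sset n C).orderIsoOfFin hS).lt_iff_lt]
        simp only [OrderIso.apply_symm_apply]
        exact Subtype.mk_lt_mk.mpr hlt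
      · rw [botF_of_S hS hT hs1, botF_of_S hS hT hs2,
          tauF_apply hS hT hs1, tauF_apply hS hT hs2] at hbot
        rw [← tIso_lt_tIso (hT := hT)]
        exact hbot
    · intro q hq
      simp only [Finset.mem_filter, Finset.mem_univ, true_and] at hq
      obtain ⟨hlt, hinv⟩ := hq
      have hm1 := (((Sset n C).orderIsoOfFin hS) q.1).2
      have hm2 := (((Sset n C).orderIsoOfFin hS) q.2).2
      have hv1 := mem_Sset.mp hm1
      have hv2 := mem_Sset.mp hm2
      simp only [hs, Finset.mem_filter, mem_grid]
      refine ⟨⟨⟨⟨hv1.1, hv2.1⟩, sIso_lt_sIso hS |>.mpr hlt, ?_⟩, hv1.2⟩, hv2.2⟩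
      rw [botF_of_S hS hT hm1, botF_of_S hS hT hm2, tauF_sIso hS hT, tauF_sIso hS hT]
      exact tIso_lt_tIso hT |>.mpr hinv
    · intro r hr
      simp only [Subtype.coe_eta, OrderIso.apply_symm_apply]
    · intro q hq
      simp only [Subtype.coe_eta, OrderIso.symm_apply_apply]
  omega

include hCg hrook in
lemma card_cross :
    ((grid n n).filter fun r =>
        botF n k C σ hS hT r.1 + botF n k C σ hS hT r.2 + 2 ≤ 2*n).card
      = k*k + 2*(IXset n C).card := by
  set s := (grid n n).filter fun r =>
    botF n k C σ hS hT r.1 + botF n k C σ hS hT r.2 + 2 ≤ 2*n with hs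
  have e1 : (s.filter fun r => r.1 ∈ rowsOf C).card
      + (s.filter fun r => ¬ r.1 ∈ rowsOf C).card = s.card :=
    Finset.card_filter_add_card_filter_not _
  have e2 : ((s.filter fun r => r.1 ∈ rowsOf C).filter fun r => r.2 ∈ rowsOf C).card
      + ((s.filter fun r => r.1 ∈ rowsOf C).filter fun r => ¬ r.2 ∈ rowsOf C).card
      = (s.filter fun r => r.1 ∈ rowsOf C).card :=
    Finset.card_filter_add_card_filter_not _
  have e3 : ((s.filter fun r => ¬ r.1 ∈ rowsOf C).filter fun r => r.2 ∈ rowsOf C).card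
      + ((s.filter fun r => ¬ r.1 ∈ rowsOf C).filter fun r => ¬ r.2 ∈ rowsOf C).card
      = (s.filter fun r => ¬ r.1 ∈ rowsOf C).card :=
    Finset.card_filter_add_card_filter_not _
  have h11 : ((s.filter fun r => r.1 ∈ rowsOf C).filter fun r => r.2 ∈ rowsOf C).card
      = 0 := by
    rw [Finset.card_eq_zero, Finset.eq_empty_iff_forall_notMem]
    intro r hr
    simp only [hs, Finset.mem_filter, mem_grid] at hr
    obtain ⟨⟨⟨⟨hr1, hr2⟩, hbot⟩, hm1⟩, hm2⟩ := hr
    rw [botF_of_R hS hT hm1, botF_of_R hS hT hm2] at hbot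
    omega
  have h10 : ((s.filter fun r => r.1 ∈ rowsOf C).filter fun r => ¬ r.2 ∈ rowsOf C).card
      = (IXset n C).card := by
    refine Finset.card_bij' (fun r _ => ((r.1, colOf C r.1), tauF n k C σ hS hT r.2))
      (fun pt _ => (pt.1.1, tauInv n k C σ hS hT pt.2)) ?_ ?_ ?_ ?_
    · intro r hr
      simp only [hs, Finset.mem_filter, mem_grid] at hr
      obtain ⟨⟨⟨⟨hr1, hr2⟩, hbot⟩, hm1⟩, hm2⟩ := hr
      have hs2 : r.2 ∈ Sset n C := mem_Sset.mpr ⟨hr2, hm2⟩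
      rw [botF_of_R hS hT hm1, botF_of_S hS hT hs2] at hbot
      simp only [IXset, Finset.mem_filter, Finset.mem_product]
      exact ⟨⟨rook_mem_of_mem_rowsOf hrook hm1, tauF_mem hS hT hs2⟩, by omega⟩
    · intro pt hpt
      simp only [IXset, Finset.mem_filter, Finset.mem_product] at hpt
      obtain ⟨⟨hp1, hp2⟩, hcond⟩ := hpt
      have hg1 := mem_grid.mp (hCg hp1)
      have hr1 : pt.1.1 ∈ rowsOf C := mem_rowsOf.mpr ⟨pt.1, hp1, rfl⟩
      have hsm := tauInv_mem hS hT (σ := σ) hp2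
      have hv := mem_Sset.mp hsm
      simp only [hs, Finset.mem_filter, mem_grid]
      refine ⟨⟨⟨⟨hg1.1, hv.1⟩, ?_⟩, hr1⟩, hv.2⟩
      rw [botF_of_R hS hT hr1, botF_of_S hS hT hsm, tauF_tauInv hS hT hp2,
        colOf_eq hrook hp1]
      omega
    · intro r hr
      simp only [hs, Finset.mem_filter, mem_grid] at hr
      obtain ⟨⟨⟨⟨hr1, hr2⟩, hbot⟩, hm1⟩, hm2⟩ := hr
      have hs2 : r.2 ∈ Sset n C := mem_Sset.mpr ⟨hr2, hm2⟩
      simp only []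
      rw [tauInv_tauF hS hT hs2]
    · intro pt hpt
      simp only [IXset, Finset.mem_filter, Finset.mem_product] at hpt
      obtain ⟨⟨hp1, hp2⟩, -⟩ := hpt
      simp only []
      rw [colOf_eq hrook hp1, tauF_tauInv hS hT hp2]
  have h01 : ((s.filter fun r => ¬ r.1 ∈ rowsOf C).filter fun r => r.2 ∈ rowsOf C).card
      = (IXset n C).card := by
    refine Finset.card_bij' (fun r _ => ((r.2, colOf C r.2), tauF n k C σ hS hT r.1))
      (fun pt _ => (tauInv n k C σ hS hT pt.2, pt.1.1)) ?_ ?_ ?_ ?_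
    · intro r hr
      simp only [hs, Finset.mem_filter, mem_grid] at hr
      obtain ⟨⟨⟨⟨hr1, hr2⟩, hbot⟩, hm1⟩, hm2⟩ := hr
      have hs1 : r.1 ∈ Sset n C := mem_Sset.mpr ⟨hr1, hm1⟩
      rw [botF_of_S hS hT hs1, botF_of_R hS hT hm2] at hbot
      simp only [IXset, Finset.mem_filter, Finset.mem_product]
      exact ⟨⟨rook_mem_of_mem_rowsOf hrook hm2, tauF_mem hS hT hs1⟩, by omega⟩
    · intro pt hpt
      simp only [IXset, Finset.mem_filter, Finset.mem_product] at hpt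
      obtain ⟨⟨hp1, hp2⟩, hcond⟩ := hpt
      have hg1 := mem_grid.mp (hCg hp1)
      have hr1 : pt.1.1 ∈ rowsOf C := mem_rowsOf.mpr ⟨pt.1, hp1, rfl⟩
      have hsm := tauInv_mem hS hT (σ := σ) hp2
      have hv := mem_Sset.mp hsm
      simp only [hs, Finset.mem_filter, mem_grid]
      refine ⟨⟨⟨⟨hv.1, hg1.1⟩, ?_⟩, hv.2⟩, hr1⟩
      rw [botF_of_R hS hT hr1, botF_of_S hS hT hsm, tauF_tauInv hS hT hp2,
        colOf_eq hrook hp1]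
      omega
    · intro r hr
      simp only [hs, Finset.mem_filter, mem_grid] at hr
      obtain ⟨⟨⟨⟨hr1, hr2⟩, hbot⟩, hm1⟩, hm2⟩ := hr
      have hs1 : r.1 ∈ Sset n C := mem_Sset.mpr ⟨hr1, hm1⟩
      simp only []
      rw [tauInv_tauF hS hT hs1]
    · intro pt hpt
      simp only [IXset, Finset.mem_filter, Finset.mem_product] at hpt
      obtain ⟨⟨hp1, hp2⟩, -⟩ := hpt
      simp only []
      rw [colOf_eq hrook hp1, tauF_tauInv hS hT hp2]
  have h00 : ((s.filter fun r => ¬ r.1 ∈ rowsOf C).filter fun r => ¬ r.2 ∈ rowsOf C).card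
      = k*k := by
    have : ((s.filter fun r => ¬ r.1 ∈ rowsOf C).filter fun r => ¬ r.2 ∈ rowsOf C)
        = Sset n C ×ˢ Sset n C := by
      ext r
      simp only [hs, Finset.mem_filter, mem_grid, Finset.mem_product]
      constructor
      · rintro ⟨⟨⟨⟨hr1, hr2⟩, hbot⟩, hm1⟩, hm2⟩
        exact ⟨mem_Sset.mpr ⟨hr1, hm1⟩, mem_Sset.mpr ⟨hr2, hm2⟩⟩
      · rintro ⟨hs1, hs2⟩
        have hv1 := mem_Sset.mp hs1
        have hv2 := mem_Sset.mp hs2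
        have ht1 := tauF_lt (σ := σ) hS hT hs1
        have ht2 := tauF_lt (σ := σ) hS hT hs2
        refine ⟨⟨⟨⟨hv1.1, hv2.1⟩, ?_⟩, hv1.2⟩, hv2.2⟩
        rw [botF_of_S hS hT hs1, botF_of_S hS hT hs2]
        omega
    rw [this, Finset.card_product, hS]
  omega

end CountSec

section CountSec2

variable {n k : ℕ} {C : Board} {σ : Equiv.Perm (Fin k)}
  (hS : (Sset n C).card = k) (hT : (Tset n C).card = k)
  (hCg : C ⊆ grid n n) (hrook : Rook C)

lemma inversions_PiPerm :
    inversions (PiPerm σ hS hT hCg hrook)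
      = 2*(ICCset C).card + 2*(IRLset n C).card + 2*inversions σ + 2*(IXset n C).card + k*k := by
  have h0 : inversions (PiPerm σ hS hT hCg hrook)
      = ((grid (2*n) (2*n)).filter fun p =>
          p.1 < p.2 ∧ bigF n k C σ hS hT p.2 < bigF n k C σ hS hT p.1).card := by
    rw [inversions]
    refine Finset.card_bij' (fun p _ => ((p.1 : ℕ), (p.2 : ℕ)))
      (fun p hp => ((⟨p.1, by
          simp only [Finset.mem_filter, mem_grid] at hp; exact hp.1.1⟩ : Fin (2*n)),
        (⟨p.2, by
          simp only [Finset.mem_filter, mem_grid] at hp; exact hp.1.2⟩ : Fin (2*n))))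
      ?_ ?_ ?_ ?_
    · intro p hp
      simp only [Finset.mem_filter, Finset.mem_univ, true_and, Fin.lt_def] at hp
      simp only [Finset.mem_filter, mem_grid]
      exact ⟨⟨p.1.2, p.2.2⟩, hp.1, by simpa using hp.2⟩
    · intro p hp
      simp only [Finset.mem_filter, mem_grid] at hp
      simp only [Finset.mem_filter, Finset.mem_univ, true_and, Fin.lt_def]
      exact ⟨hp.2.1, by simpa using hp.2.2⟩
    · intro p _
      simp
    · intro p hp
      simp
  rw [h0]
  set N := (grid (2*n) (2*n)).filter fun p =>
    p.1 < p.2 ∧ bigF n k C σ hS hT p.2 < bigF n k C σ hS hT p.1 with hN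
  have e1 : (N.filter fun p => n ≤ p.1).card + (N.filter fun p => ¬ n ≤ p.1).card = N.card :=
    Finset.card_filter_add_card_filter_not _
  have e2 : ((N.filter fun p => ¬ n ≤ p.1).filter fun p => n ≤ p.2).card
      + ((N.filter fun p => ¬ n ≤ p.1).filter fun p => ¬ n ≤ p.2).card
      = (N.filter fun p => ¬ n ≤ p.1).card :=
    Finset.card_filter_add_card_filter_not _
  have hBB : (N.filter fun p => n ≤ p.1).card
      = ((grid n n).filter fun r =>
          r.1 < r.2 ∧ botF n k C σ hS hT r.2 < botF n k C σ hS hT r.1).card := by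
    refine Finset.card_bij' (fun p _ => (p.1 - n, p.2 - n)) (fun r _ => (r.1 + n, r.2 + n))
      ?_ ?_ ?_ ?_
    · intro p hp
      simp only [hN, Finset.mem_filter, mem_grid] at hp
      obtain ⟨⟨⟨h1, h2⟩, hlt, hbig⟩, hge⟩ := hp
      have hge2 : n ≤ p.2 := by omega
      rw [bigF_bot hS hT hge, bigF_bot hS hT hge2] at hbig
      simp only [Finset.mem_filter, mem_grid]
      exact ⟨⟨by omega, by omega⟩, by omega, hbig⟩
    · intro r hr
      simp only [Finset.mem_filter, mem_grid] at hr
      obtain ⟨⟨h1, h2⟩, hlt, hbot⟩ := hr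
      simp only [hN, Finset.mem_filter, mem_grid]
      refine ⟨⟨⟨by omega, by omega⟩, by omega, ?_⟩, by omega⟩
      rw [bigF_bot hS hT (by omega), bigF_bot hS hT (by omega)]
      have ea : r.1 + n - n = r.1 := by omega
      have eb : r.2 + n - n = r.2 := by omega
      rw [ea, eb]
      exact hbot
    · intro p hp
      simp only [hN, Finset.mem_filter, mem_grid] at hp
      have h1 : p.1 - n + n = p.1 := by omega
      have h2 : p.2 - n + n = p.2 := by omega
      simp only []
      rw [h1, h2]
    · intro r hr
      simp only [Finset.mem_filter, mem_grid] at hr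
      have h1 : r.1 + n - n = r.1 := by omega
      have h2 : r.2 + n - n = r.2 := by omega
      simp only []
      rw [h1, h2]
  have hTT : ((N.filter fun p => ¬ n ≤ p.1).filter fun p => ¬ n ≤ p.2).card
      = ((grid n n).filter fun r =>
          r.1 < r.2 ∧ botF n k C σ hS hT r.2 < botF n k C σ hS hT r.1).card := by
    refine Finset.card_bij' (fun p _ => (n - 1 - p.2, n - 1 - p.1))
      (fun r _ => (n - 1 - r.2, n - 1 - r.1)) ?_ ?_ ?_ ?_
    · intro p hp
      simp only [hN, Finset.mem_filter, mem_grid] at hp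
      obtain ⟨⟨⟨⟨h1, h2⟩, hlt, hbig⟩, hn1⟩, hn2⟩ := hp
      rw [bigF_top hS hT (i := p.2) (by omega), bigF_top hS hT (i := p.1) (by omega)] at hbig
      have hb1 := botF_lt (σ := σ) hS hT hCg hrook (j := n - 1 - p.1) (by omega)
      have hb2 := botF_lt (σ := σ) hS hT hCg hrook (j := n - 1 - p.2) (by omega)
      simp only [Finset.mem_filter, mem_grid]
      exact ⟨⟨by omega, by omega⟩, by omega, by omega⟩
    · intro r hr
      simp only [Finset.mem_filter, mem_grid] at hr
      obtain ⟨⟨h1, h2⟩, hlt, hbot⟩ := hr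
      simp only [hN, Finset.mem_filter, mem_grid]
      refine ⟨⟨⟨⟨by omega, by omega⟩, by omega, ?_⟩, by omega⟩, by omega⟩
      rw [bigF_top hS hT (i := n - 1 - r.2) (by omega), bigF_top hS hT (i := n - 1 - r.1) (by omega)]
      have ea : n - 1 - (n - 1 - r.1) = r.1 := by omega
      have eb : n - 1 - (n - 1 - r.2) = r.2 := by omega
      rw [ea, eb]
      have hb1 := botF_lt (σ := σ) hS hT hCg hrook (j := r.1) (by omega)
      have hb2 := botF_lt (σ := σ) hS hT hCg hrook (j := r.2) (by omega)
      omega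
    · intro p hp
      simp only [hN, Finset.mem_filter, mem_grid] at hp
      have h1 : n - 1 - (n - 1 - p.1) = p.1 := by omega
      have h2 : n - 1 - (n - 1 - p.2) = p.2 := by omega
      simp only []
      rw [h1, h2]
    · intro r hr
      simp only [Finset.mem_filter, mem_grid] at hr
      have h1 : n - 1 - (n - 1 - r.1) = r.1 := by omega
      have h2 : n - 1 - (n - 1 - r.2) = r.2 := by omega
      simp only []
      rw [h1, h2]
  have hTB : ((N.filter fun p => ¬ n ≤ p.1).filter fun p => n ≤ p.2).card
      = ((grid n n).filter fun r =>
          botF n k C σ hS hT r.1 + botF n k C σ hS hT r.2 + 2 ≤ 2*n).card := by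
    refine Finset.card_bij' (fun p _ => (n - 1 - p.1, p.2 - n))
      (fun r _ => (n - 1 - r.1, r.2 + n)) ?_ ?_ ?_ ?_
    · intro p hp
      simp only [hN, Finset.mem_filter, mem_grid] at hp
      obtain ⟨⟨⟨⟨h1, h2⟩, hlt, hbig⟩, hn1⟩, hn2⟩ := hp
      rw [bigF_top hS hT (i := p.1) (by omega), bigF_bot hS hT (i := p.2) (by omega)] at hbig
      have hb1 := botF_lt (σ := σ) hS hT hCg hrook (j := n - 1 - p.1) (by omega)
      simp only [Finset.mem_filter, mem_grid]
      exact ⟨⟨by omega, by omega⟩, by omega⟩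
    · intro r hr
      simp only [Finset.mem_filter, mem_grid] at hr
      obtain ⟨⟨h1, h2⟩, hbot⟩ := hr
      simp only [hN, Finset.mem_filter, mem_grid]
      refine ⟨⟨⟨⟨by omega, by omega⟩, by omega, ?_⟩, by omega⟩, by omega⟩
      rw [bigF_top hS hT (i := n - 1 - r.1) (by omega), bigF_bot hS hT (i := r.2 + n) (by omega)]
      have ea : n - 1 - (n - 1 - r.1) = r.1 := by omega
      have eb : r.2 + n - n = r.2 := by omega
      rw [ea, eb]
      have hb1 := botF_lt (σ := σ) hS hT hCg hrook (j := r.1) (by omega)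
      omega
    · intro p hp
      simp only [hN, Finset.mem_filter, mem_grid] at hp
      have h1 : n - 1 - (n - 1 - p.1) = p.1 := by omega
      have h2 : p.2 - n + n = p.2 := by omega
      simp only []
      rw [h1, h2]
    · intro r hr
      simp only [Finset.mem_filter, mem_grid] at hr
      have h1 : n - 1 - (n - 1 - r.1) = r.1 := by omega
      have h2 : r.2 + n - n = r.2 := by omega
      simp only []
      rw [h1, h2]
  have hb := card_botinv hS hT hCg hrook (σ := σ)
  have hx := card_cross hS hT hCg hrook (σ := σ)
  omega

include hCg hrook in
lemma card_IX_IXc : (IXset n C).card = (IXcset n C).card := by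
  refine Finset.card_bij' (fun pt _ => (pt.1, n - 1 - pt.2)) (fun pt _ => (pt.1, n - 1 - pt.2))
    ?_ ?_ ?_ ?_
  · intro pt hpt
    simp only [IXset, Finset.mem_filter, Finset.mem_product] at hpt
    obtain ⟨⟨hp1, hp2⟩, hcond⟩ := hpt
    obtain ⟨htn, hforb⟩ := mem_Tset.mp hp2
    have hc2 := (mem_grid.mp (hCg hp1)).2
    simp only [IXcset, Finset.mem_filter, Finset.mem_product, Finset.mem_sdiff,
      Finset.mem_range]
    refine ⟨⟨hp1, ⟨by omega, ?_⟩⟩, by omega⟩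
    intro hcol
    obtain ⟨c, hc, hceq⟩ := mem_colsOf.mp hcol
    exact hforb c hc (by
      have := (mem_grid.mp (hCg hc)).2
      omega)
  · intro pt hpt
    simp only [IXcset, Finset.mem_filter, Finset.mem_product, Finset.mem_sdiff,
      Finset.mem_range] at hpt
    obtain ⟨⟨hp1, htn, hncol⟩, hcond⟩ := hpt
    have hc2 := (mem_grid.mp (hCg hp1)).2
    simp only [IXset, Finset.mem_filter, Finset.mem_product]
    refine ⟨⟨hp1, mem_Tset.mpr ⟨by omega, ?_⟩⟩, by omega⟩
    intro c hc hceq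
    have hcc := (mem_grid.mp (hCg hc)).2
    exact hncol (mem_colsOf.mpr ⟨c, hc, by omega⟩)
  · intro pt hpt
    simp only [IXset, Finset.mem_filter, Finset.mem_product] at hpt
    have := (mem_Tset.mp hpt.1.2).1
    have h1 : n - 1 - (n - 1 - pt.2) = pt.2 := by omega
    simp only []
    rw [h1]
  · intro pt hpt
    simp only [IXcset, Finset.mem_filter, Finset.mem_product, Finset.mem_sdiff,
      Finset.mem_range] at hpt
    have h1 : n - 1 - (n - 1 - pt.2) = pt.2 := by omega
    simp only []
    rw [h1]

include hrook in
lemma forall_row_iff {a b : ℕ} (h : a ∈ rowsOf C) :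
    (∀ c ∈ C, c.1 = a → c.2 < b) ↔ colOf C a < b := by
  constructor
  · intro H
    exact H _ (rook_mem_of_mem_rowsOf hrook h) rfl
  · intro H c hc hca
    have : colOf C a = c.2 := by rw [← hca]; exact colOf_eq hrook hc
    omega

lemma forall_row_vac {a b : ℕ} (h : a ∉ rowsOf C) :
    ∀ c ∈ C, c.1 = a → c.2 < b :=
  fun c hc hca => absurd (mem_rowsOf.mpr ⟨c, hc, hca⟩) h

include hrook in
lemma forall_col_iff {a b : ℕ} (h : b ∈ colsOf C) :
    (∀ c ∈ C, c.2 = b → c.1 < a) ↔ rowOf C b < a := by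
  constructor
  · intro H
    exact H _ (rook_mem_of_mem_colsOf hrook h) rfl
  · intro H c hc hcb
    have : rowOf C b = c.1 := by rw [← hcb]; exact rowOf_eq hrook hc
    omega

lemma forall_col_vac {a b : ℕ} (h : b ∉ colsOf C) :
    ∀ c ∈ C, c.2 = b → c.1 < a :=
  fun c hc hcb => absurd (mem_colsOf.mpr ⟨c, hc, hcb⟩) h

include hS hCg hrook in
lemma invStat_eq (hkn : k ≤ n) (hcard : C.card = n - k) :
    invStat n n C = (ICCset C).card + (IRLset n C).card + (IXcset n C).card + k*k := by
  rw [invStat]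
  set G := (grid n n).filter fun a =>
    (∀ c ∈ C, c.1 = a.1 → c.2 < a.2) ∧ (∀ c ∈ C, c.2 = a.2 → c.1 < a.1) with hG
  have e1 : (G.filter fun r => r.1 ∈ rowsOf C).card
      + (G.filter fun r => ¬ r.1 ∈ rowsOf C).card = G.card :=
    Finset.card_filter_add_card_filter_not _
  have e2 : ((G.filter fun r => r.1 ∈ rowsOf C).filter fun r => r.2 ∈ colsOf C).card
      + ((G.filter fun r => r.1 ∈ rowsOf C).filter fun r => ¬ r.2 ∈ colsOf C).card
      = (G.filter fun r => r.1 ∈ rowsOf C).card :=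
    Finset.card_filter_add_card_filter_not _
  have e3 : ((G.filter fun r => ¬ r.1 ∈ rowsOf C).filter fun r => r.2 ∈ colsOf C).card
      + ((G.filter fun r => ¬ r.1 ∈ rowsOf C).filter fun r => ¬ r.2 ∈ colsOf C).card
      = (G.filter fun r => ¬ r.1 ∈ rowsOf C).card :=
    Finset.card_filter_add_card_filter_not _
  have h11 : ((G.filter fun r => r.1 ∈ rowsOf C).filter fun r => r.2 ∈ colsOf C).card
      = (ICCset C).card := by
    refine Finset.card_bij' (fun r _ => ((rowOf C r.2, r.2), (r.1, colOf C r.1)))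
      (fun pp _ => (pp.2.1, pp.1.2)) ?_ ?_ ?_ ?_
    · intro r hr
      simp only [hG, Finset.mem_filter, mem_grid] at hr
      obtain ⟨⟨⟨⟨h1, h2⟩, hrow, hcol⟩, hm1⟩, hm2⟩ := hr
      rw [forall_row_iff hrook hm1] at hrow
      rw [forall_col_iff hrook hm2] at hcol
      simp only [ICCset, Finset.mem_filter, Finset.mem_product]
      exact ⟨⟨rook_mem_of_mem_colsOf hrook hm2, rook_mem_of_mem_rowsOf hrook hm1⟩,
        hcol, hrow⟩
    · intro pp hpp
      simp only [ICCset, Finset.mem_filter, Finset.mem_product] at hpp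
      obtain ⟨⟨hp1, hp2⟩, hlt1, hlt2⟩ := hpp
      have hg1 := mem_grid.mp (hCg hp1)
      have hg2 := mem_grid.mp (hCg hp2)
      have hm1 : pp.2.1 ∈ rowsOf C := mem_rowsOf.mpr ⟨pp.2, hp2, rfl⟩
      have hm2 : pp.1.2 ∈ colsOf C := mem_colsOf.mpr ⟨pp.1, hp1, rfl⟩
      simp only [hG, Finset.mem_filter, mem_grid]
      refine ⟨⟨⟨⟨hg2.1, hg1.2⟩, ?_, ?_⟩, hm1⟩, hm2⟩
      · rw [forall_row_iff hrook hm1, colOf_eq hrook hp2]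
        exact hlt2
      · rw [forall_col_iff hrook hm2, rowOf_eq hrook hp1]
        exact hlt1
    · intro r hr
      simp only [hG, Finset.mem_filter, mem_grid] at hr
      simp only []
    · intro pp hpp
      simp only [ICCset, Finset.mem_filter, Finset.mem_product] at hpp
      obtain ⟨⟨hp1, hp2⟩, -, -⟩ := hpp
      simp only []
      rw [rowOf_eq hrook hp1, colOf_eq hrook hp2]
  have h10 : ((G.filter fun r => r.1 ∈ rowsOf C).filter fun r => ¬ r.2 ∈ colsOf C).card
      = (IXcset n C).card := by
    refine Finset.card_bij' (fun r _ => ((r.1, colOf C r.1), r.2))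
      (fun pt _ => (pt.1.1, pt.2)) ?_ ?_ ?_ ?_
    · intro r hr
      simp only [hG, Finset.mem_filter, mem_grid] at hr
      obtain ⟨⟨⟨⟨h1, h2⟩, hrow, hcol⟩, hm1⟩, hm2⟩ := hr
      rw [forall_row_iff hrook hm1] at hrow
      simp only [IXcset, Finset.mem_filter, Finset.mem_product, Finset.mem_sdiff,
        Finset.mem_range]
      exact ⟨⟨rook_mem_of_mem_rowsOf hrook hm1, h2, hm2⟩, hrow⟩
    · intro pt hpt
      simp only [IXcset, Finset.mem_filter, Finset.mem_product, Finset.mem_sdiff,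
        Finset.mem_range] at hpt
      obtain ⟨⟨hp1, htn, hncol⟩, hcond⟩ := hpt
      have hg1 := mem_grid.mp (hCg hp1)
      have hm1 : pt.1.1 ∈ rowsOf C := mem_rowsOf.mpr ⟨pt.1, hp1, rfl⟩
      simp only [hG, Finset.mem_filter, mem_grid]
      refine ⟨⟨⟨⟨hg1.1, htn⟩, ?_, forall_col_vac hncol⟩, hm1⟩, hncol⟩
      rw [forall_row_iff hrook hm1, colOf_eq hrook hp1]
      exact hcond
    · intro r hr
      simp only []
    · intro pt hpt
      simp only [IXcset, Finset.mem_filter, Finset.mem_product, Finset.mem_sdiff,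
        Finset.mem_range] at hpt
      obtain ⟨⟨hp1, -, -⟩, -⟩ := hpt
      simp only []
      rw [colOf_eq hrook hp1]
  have h01 : ((G.filter fun r => ¬ r.1 ∈ rowsOf C).filter fun r => r.2 ∈ colsOf C).card
      = (IRLset n C).card := by
    refine Finset.card_bij' (fun r _ => ((rowOf C r.2, r.2), r.1))
      (fun ps _ => (ps.2, ps.1.2)) ?_ ?_ ?_ ?_
    · intro r hr
      simp only [hG, Finset.mem_filter, mem_grid] at hr
      obtain ⟨⟨⟨⟨h1, h2⟩, hrow, hcol⟩, hm1⟩, hm2⟩ := hr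
      rw [forall_col_iff hrook hm2] at hcol
      simp only [IRLset, Finset.mem_filter, Finset.mem_product]
      exact ⟨⟨rook_mem_of_mem_colsOf hrook hm2, mem_Sset.mpr ⟨h1, hm1⟩⟩, hcol⟩
    · intro ps hps
      simp only [IRLset, Finset.mem_filter, Finset.mem_product] at hps
      obtain ⟨⟨hp1, hp2⟩, hlt⟩ := hps
      have hg1 := mem_grid.mp (hCg hp1)
      have hm2 : ps.1.2 ∈ colsOf C := mem_colsOf.mpr ⟨ps.1, hp1, rfl⟩
      have hv := mem_Sset.mp hp2
      simp only [hG, Finset.mem_filter, mem_grid]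
      refine ⟨⟨⟨⟨hv.1, hg1.2⟩, forall_row_vac hv.2, ?_⟩, hv.2⟩, hm2⟩
      rw [forall_col_iff hrook hm2, rowOf_eq hrook hp1]
      exact hlt
    · intro r hr
      simp only []
    · intro ps hps
      simp only [IRLset, Finset.mem_filter, Finset.mem_product] at hps
      obtain ⟨⟨hp1, -⟩, -⟩ := hps
      simp only []
      rw [rowOf_eq hrook hp1]
  have h00 : ((G.filter fun r => ¬ r.1 ∈ rowsOf C).filter fun r => ¬ r.2 ∈ colsOf C).card
      = k*k := by
    have hset : ((G.filter fun r => ¬ r.1 ∈ rowsOf C).filter fun r => ¬ r.2 ∈ colsOf C)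
        = Sset n C ×ˢ (Finset.range n \ colsOf C) := by
      ext r
      simp only [hG, Finset.mem_filter, mem_grid, Finset.mem_product, Finset.mem_sdiff,
        Finset.mem_range]
      constructor
      · rintro ⟨⟨⟨⟨h1, h2⟩, -, -⟩, hm1⟩, hm2⟩
        exact ⟨mem_Sset.mpr ⟨h1, hm1⟩, h2, hm2⟩
      · rintro ⟨hs1, h2, hm2⟩
        have hv := mem_Sset.mp hs1
        exact ⟨⟨⟨⟨hv.1, h2⟩, forall_row_vac hv.2, forall_col_vac hm2⟩, hv.2⟩, hm2⟩
    rw [hset, Finset.card_product, hS]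
    have : (Finset.range n \ colsOf C).card = k := by
      rw [Finset.card_sdiff_of_subset (colsOf_subset hCg), Finset.card_range, card_colsOf hrook, hcard]
      omega
    rw [this]
  omega

include hCg hrook in
lemma key_count (hkn : k ≤ n) (hcard : C.card = n - k) :
    inversions (PiPerm σ hS hT hCg hrook) + k*k
      = 2*invStat n n C + 2*inversions σ := by
  have h1 := inversions_PiPerm hS hT hCg hrook (σ := σ)
  have h2 := invStat_eq hS hCg hrook hkn hcard
  have h3 := card_IX_IXc hCg hrook
  omega

end CountSec2

section Recovery

variable {n : ℕ}

/-- recover the rook configuration from a symmetric permutation -/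
def Crec (n : ℕ) (π : Equiv.Perm (Fin (2*n))) : Board :=
  ((Finset.univ : Finset (Fin (2*n))).filter fun i : Fin (2*n) => n ≤ (i:ℕ) ∧ n ≤ (π i : ℕ)).image
    fun i : Fin (2*n) => ((i:ℕ) - n, (π i : ℕ) - n)

lemma symval {π : Equiv.Perm (Fin (2*n))} (hsym : rot180Perm π = π) (i : Fin (2*n)) :
    (π (Fin.rev i) : ℕ) = 2*n - 1 - (π i : ℕ) := by
  have h := congrArg (fun ρ : Equiv.Perm (Fin (2*n)) => ((ρ i : Fin (2*n)) : ℕ)) hsym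
  simp only [rot180Perm, Equiv.trans_apply, Fin.revPerm_apply, Fin.val_rev] at h
  have h2 : (π (Fin.rev i) : ℕ) < 2*n := (π (Fin.rev i)).2
  have h3 : (π i : ℕ) < 2*n := (π i).2
  omega

lemma val_inj {π : Equiv.Perm (Fin (2*n))} {a b : Fin (2*n)}
    (h : (π a : ℕ) = (π b : ℕ)) : a = b :=
  π.injective (Fin.ext h)

lemma Crec_subset {A : Board} {π : Equiv.Perm (Fin (2*n))} (hA : A ⊆ grid n n)
    (hcov : Covers (blockSharp n n (rot180 n n A) A) π) : Crec n π ⊆ A := by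
  intro p hp
  obtain ⟨i, hi, hieq⟩ := Finset.mem_image.mp hp
  simp only [Finset.mem_filter, Finset.mem_univ, true_and] at hi
  obtain ⟨hi1, hi2⟩ := hi
  have hc := hcov i
  rw [blockSharp] at hc
  simp only [Finset.mem_union] at hc
  rcases hc with ((h1 | h2) | h3) | h4
  · exfalso
    rw [rot180] at h1
    obtain ⟨c, hcA, hceq⟩ := Finset.mem_image.mp h1
    have hg := mem_grid.mp (hA hcA)
    have : (i : ℕ) = n - 1 - c.1 := (congrArg Prod.fst hceq).symm
    omega
  · exfalso
    simp only [Finset.mem_product, Finset.mem_range, Finset.mem_Ico] at h2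
    omega
  · exfalso
    simp only [Finset.mem_product, Finset.mem_range, Finset.mem_Ico] at h3
    omega
  · obtain ⟨c, hcA, hceq⟩ := Finset.mem_image.mp h4
    have h1 : c.1 + n = (i : ℕ) := congrArg Prod.fst hceq
    have h2 : c.2 + n = (π i : ℕ) := congrArg Prod.snd hceq
    rw [← hieq]
    have : ((i:ℕ) - n, (π i : ℕ) - n) = c := by
      rw [Prod.ext_iff]
      constructor <;> simp <;> omega
    rw [this]
    exact hcA

lemma Crec_rook {π : Equiv.Perm (Fin (2*n))} : Rook (Crec n π) := by
  intro c hc c' hc' hne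
  obtain ⟨i, hi, hieq⟩ := Finset.mem_image.mp hc
  obtain ⟨j, hj, hjeq⟩ := Finset.mem_image.mp hc'
  simp only [Finset.mem_filter, Finset.mem_univ, true_and] at hi hj
  have hij : i ≠ j := by
    rintro rfl
    exact hne (hieq.symm.trans hjeq)
  constructor
  · rw [← hieq, ← hjeq]
    simp only []
    intro hcon
    exact hij (Fin.ext (by omega))
  · rw [← hieq, ← hjeq]
    simp only []
    intro hcon
    have hvi : (π i : ℕ) = (π j : ℕ) := by omega
    exact hij (val_inj hvi)

lemma card_botrows (π : Equiv.Perm (Fin (2*n))) :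
    ((Finset.univ : Finset (Fin (2*n))).filter fun i : Fin (2*n) => n ≤ (i:ℕ)).card = n := by
  have h : ((Finset.univ : Finset (Fin (2*n))).filter fun i : Fin (2*n) => n ≤ (i:ℕ)).card
      = (Finset.range n).card := by
    refine Finset.card_bij' (fun i _ => (i : ℕ) - n)
      (fun r hr => (⟨r + n, by simp only [Finset.mem_range] at hr; omega⟩ : Fin (2*n)))
      ?_ ?_ ?_ ?_
    · intro i hi
      simp only [Finset.mem_filter, Finset.mem_univ, true_and] at hi
      simp only [Finset.mem_range]
      have := i.2
      omega
    · intro r hr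
      simp only [Finset.mem_filter, Finset.mem_univ, true_and]
      simp
    · intro i hi
      simp only [Finset.mem_filter, Finset.mem_univ, true_and] at hi
      exact Fin.ext (by simp; omega)
    · intro r hr
      simp only [Finset.mem_range] at hr
      simp
  rw [h, Finset.card_range]

lemma negStat_le (π : Equiv.Perm (Fin (2*n))) : negStat n π ≤ n := by
  rw [negStat]
  refine le_trans (Finset.card_le_card (fun i hi => ?_)) (le_of_eq (card_botrows π))
  simp only [Finset.mem_filter, Finset.mem_univ, true_and] at hi ⊢
  exact hi.1

lemma Crec_card {π : Equiv.Perm (Fin (2*n))} :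
    (Crec n π).card = n - negStat n π := by
  rw [Crec, Finset.card_image_of_injOn]
  · have e0 : ((Finset.univ : Finset (Fin (2*n))).filter fun i : Fin (2*n) => n ≤ (i:ℕ) ∧ n ≤ (π i : ℕ))
        = ((Finset.univ : Finset (Fin (2*n))).filter fun i : Fin (2*n) => n ≤ (i:ℕ)).filter
            fun i => n ≤ (π i : ℕ) := by
      rw [Finset.filter_filter]
    have e1 : negStat n π
        = (((Finset.univ : Finset (Fin (2*n))).filter fun i : Fin (2*n) => n ≤ (i:ℕ)).filter
            fun i => ¬ n ≤ (π i : ℕ)).card := by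
      rw [negStat, Finset.filter_filter]
      congr 1
      apply Finset.filter_congr
      intro i _
      constructor
      · rintro ⟨h1, h2⟩; exact ⟨h1, by omega⟩
      · rintro ⟨h1, h2⟩; exact ⟨h1, by omega⟩
    have e2 := Finset.card_filter_add_card_filter_not
      (s := (Finset.univ : Finset (Fin (2*n))).filter fun i : Fin (2*n) => n ≤ (i:ℕ))
      (p := fun i => n ≤ (π i : ℕ))
    rw [card_botrows π] at e2
    rw [e0]
    omega
  · intro i hi j hj hij
    simp only [Finset.mem_coe, Finset.mem_filter, Finset.mem_univ, true_and] at hi hj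
    have h1 : (i : ℕ) - n = (j : ℕ) - n := congrArg Prod.fst hij
    exact Fin.ext (by omega)

lemma mem_rowsOf_Crec {π : Equiv.Perm (Fin (2*n))} {r : ℕ} (hr : r < n) :
    r ∈ rowsOf (Crec n π) ↔ n ≤ (π ⟨r + n, by omega⟩ : ℕ) := by
  constructor
  · intro h
    obtain ⟨c, hc, hceq⟩ := mem_rowsOf.mp h
    obtain ⟨i, hi, hieq⟩ := Finset.mem_image.mp hc
    simp only [Finset.mem_filter, Finset.mem_univ, true_and] at hi
    have h1 : (i : ℕ) - n = c.1 := congrArg Prod.fst hieq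
    have hieq2 : i = ⟨r + n, by omega⟩ := Fin.ext (by simp; omega)
    rw [← hieq2]
    exact hi.2
  · intro h
    refine mem_rowsOf.mpr ⟨(r, (π ⟨r + n, by omega⟩ : ℕ) - n), ?_, rfl⟩
    refine Finset.mem_image.mpr ⟨⟨r + n, by omega⟩, ?_, ?_⟩
    · simp only [Finset.mem_filter, Finset.mem_univ, true_and]
      exact ⟨by simp, h⟩
    · simp

lemma colOf_Crec {π : Equiv.Perm (Fin (2*n))} {r : ℕ} (hr : r < n)
    (h : n ≤ (π ⟨r + n, by omega⟩ : ℕ)) :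
    colOf (Crec n π) r = (π ⟨r + n, by omega⟩ : ℕ) - n := by
  have hmem : (r, (π ⟨r + n, by omega⟩ : ℕ) - n) ∈ Crec n π := by
    refine Finset.mem_image.mpr ⟨⟨r + n, by omega⟩, ?_, ?_⟩
    · simp only [Finset.mem_filter, Finset.mem_univ, true_and]
      exact ⟨by simp, h⟩
    · simp
  exact colOf_eq Crec_rook hmem

lemma mem_Sset_Crec {π : Equiv.Perm (Fin (2*n))} {r : ℕ} :
    r ∈ Sset n (Crec n π) ↔ ∃ hr : r < n, (π ⟨r + n, by omega⟩ : ℕ) < n := by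
  constructor
  · intro h
    obtain ⟨h1, h2⟩ := mem_Sset.mp h
    refine ⟨h1, ?_⟩
    have := (mem_rowsOf_Crec h1 (π := π)).not.mp h2
    omega
  · rintro ⟨h1, h2⟩
    refine mem_Sset.mpr ⟨h1, ?_⟩
    rw [mem_rowsOf_Crec h1]
    omega

lemma pi_mem_Tset_Crec {π : Equiv.Perm (Fin (2*n))} (hsym : rot180Perm π = π)
    {s : ℕ} (hs : s ∈ Sset n (Crec n π)) :
    (π ⟨s + n, by have := (mem_Sset.mp hs).1; omega⟩ : ℕ) ∈ Tset n (Crec n π) := by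
  obtain ⟨h1, h2⟩ := mem_Sset_Crec.mp hs
  refine mem_Tset.mpr ⟨h2, ?_⟩
  intro c hc hceq
  obtain ⟨i, hi, hieq⟩ := Finset.mem_image.mp hc
  simp only [Finset.mem_filter, Finset.mem_univ, true_and] at hi
  obtain ⟨hi1, hi2⟩ := hi
  have hc2 : c.2 = (π i : ℕ) - n := (congrArg Prod.snd hieq).symm
  -- n - 1 - ((π i) - n) = 2n - 1 - π i = π (rev i)
  have hrev := symval hsym i
  have hival : (π (Fin.rev i) : ℕ) = (π ⟨s + n, by omega⟩ : ℕ) := by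
    have hpi : (π i : ℕ) < 2*n := (π i).2
    omega
  have := val_inj hival
  have hrevval : (Fin.rev i : ℕ) = 2*n - ((i:ℕ) + 1) := Fin.val_rev i
  have : (Fin.rev i : ℕ) = s + n := by rw [this]
  have hi3 : (i : ℕ) < 2*n := i.2
  omega

end Recovery

section Decode

variable {n : ℕ}

/-- recover `σ` from a symmetric permutation -/
noncomputable def sigRec (n : ℕ) (π : Equiv.Perm (Fin (2*n))) (hsym : rot180Perm π = π)
    (hS0 : (Sset n (Crec n π)).card = negStat n π)
    (hT0 : (Tset n (Crec n π)).card = negStat n π) :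
    Equiv.Perm (Fin (negStat n π)) :=
  Equiv.ofBijective (fun a =>
    ((Tset n (Crec n π)).orderIsoOfFin hT0).symm
      ⟨(π ⟨(((Sset n (Crec n π)).orderIsoOfFin hS0 a : ℕ)) + n, by
          have := (mem_Sset.mp ((Sset n (Crec n π)).orderIsoOfFin hS0 a).2).1
          omega⟩ : ℕ),
        pi_mem_Tset_Crec hsym ((Sset n (Crec n π)).orderIsoOfFin hS0 a).2⟩)
    (Finite.injective_iff_bijective.mp (by
      intro a b hab
      have h1 := congrArg (fun x => (((Tset n (Crec n π)).orderIsoOfFin hT0) x : ℕ)) hab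
      simp only [OrderIso.apply_symm_apply] at h1
      have h2 : π ⟨(((Sset n (Crec n π)).orderIsoOfFin hS0 a : ℕ)) + n, by
          have := (mem_Sset.mp ((Sset n (Crec n π)).orderIsoOfFin hS0 a).2).1; omega⟩
          = π ⟨(((Sset n (Crec n π)).orderIsoOfFin hS0 b : ℕ)) + n, by
          have := (mem_Sset.mp ((Sset n (Crec n π)).orderIsoOfFin hS0 b).2).1; omega⟩ :=
        Fin.ext h1
      have h3 := π.injective h2
      have h4 : (((Sset n (Crec n π)).orderIsoOfFin hS0 a : ℕ))
          = (((Sset n (Crec n π)).orderIsoOfFin hS0 b : ℕ)) := by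
        have := congrArg Fin.val h3
        simpa using this
      exact ((Sset n (Crec n π)).orderIsoOfFin hS0).injective (Subtype.ext h4)))

lemma botF_rec {π : Equiv.Perm (Fin (2*n))} (hsym : rot180Perm π = π)
    (hS0 : (Sset n (Crec n π)).card = negStat n π)
    (hT0 : (Tset n (Crec n π)).card = negStat n π)
    {r : ℕ} (hr : r < n) :
    botF n (negStat n π) (Crec n π) (sigRec n π hsym hS0 hT0) hS0 hT0 r
      = (π ⟨r + n, by omega⟩ : ℕ) := by
  by_cases h : n ≤ (π ⟨r + n, by omega⟩ : ℕ)
  · have hrow : r ∈ rowsOf (Crec n π) := (mem_rowsOf_Crec hr).mpr h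
    rw [botF_of_R hS0 hT0 hrow, colOf_Crec hr h]
    omega
  · have hsm : r ∈ Sset n (Crec n π) := mem_Sset_Crec.mpr ⟨hr, by omega⟩
    rw [botF_of_S hS0 hT0 hsm, tauF_apply hS0 hT0 hsm]
    rw [sigRec]
    simp only [Equiv.ofBijective_apply, OrderIso.apply_symm_apply]

lemma PiPerm_eq_of {A : Board} {π : Equiv.Perm (Fin (2*n))} (hA : A ⊆ grid n n)
    (hsym : rot180Perm π = π) (hcov : Covers (blockSharp n n (rot180 n n A) A) π)
    (hS0 : (Sset n (Crec n π)).card = negStat n π)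
    (hT0 : (Tset n (Crec n π)).card = negStat n π)
    (hCg0 : Crec n π ⊆ grid n n) :
    PiPerm (sigRec n π hsym hS0 hT0) hS0 hT0 hCg0 Crec_rook = π := by
  refine Equiv.ext fun i => Fin.ext ?_
  have hi2 : (i : ℕ) < 2*n := i.2
  rw [PiPerm_apply]
  by_cases hi : (i : ℕ) < n
  · set j : Fin (2*n) := ⟨(n - 1 - (i:ℕ)) + n, by omega⟩ with hjdef
    have h1 : botF n (negStat n π) (Crec n π) (sigRec n π hsym hS0 hT0) hS0 hT0
        (n - 1 - (i:ℕ)) = (π j : ℕ) :=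
      botF_rec hsym hS0 hT0 (by omega)
    have hre : Fin.rev i = j := Fin.ext (by rw [Fin.val_rev]; simp [hjdef]; omega)
    have hrv := symval hsym (Fin.rev i)
    rw [Fin.rev_rev, hre] at hrv
    have hb : (π j : ℕ) < 2*n := (π j).2
    rw [bigF_top hS0 hT0 hi, h1]
    omega
  · have hj : (⟨((i:ℕ) - n) + n, by omega⟩ : Fin (2*n)) = i := Fin.ext (by simp; omega)
    exact (bigF_bot hS0 hT0 (by omega)).trans
      ((botF_rec hsym hS0 hT0 (by omega)).trans
        (congrArg (fun x : Fin (2*n) => (π x : ℕ)) hj))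

variable {k : ℕ} {C : Board} {σ : Equiv.Perm (Fin k)}
  (hS : (Sset n C).card = k) (hT : (Tset n C).card = k)
  (hCg : C ⊆ grid n n) (hrook : Rook C)

lemma Crec_PiPerm : Crec n (PiPerm σ hS hT hCg hrook) = C := by
  ext p
  constructor
  · intro hp
    obtain ⟨i, hi, hieq⟩ := Finset.mem_image.mp hp
    simp only [Finset.mem_filter_univ, Finset.mem_filter, Finset.mem_univ, true_and, PiPerm_apply] at hi
    obtain ⟨hi1, hi2⟩ := (Finset.mem_filter.mp hi).2
    rw [bigF_bot hS hT hi1] at hi2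
    have hin : (i : ℕ) - n < n := by have := i.2; omega
    have hrow : (i : ℕ) - n ∈ rowsOf C := (n_le_botF_iff hS hT hin).mp hi2
    have hcv : bigF n k C σ hS hT (i : ℕ) = n + colOf C ((i:ℕ) - n) := by
      rw [bigF_bot hS hT hi1, botF_of_R hS hT hrow]
    rw [← hieq]
    simp only [PiPerm_apply, hcv]
    have he : n + colOf C ((i:ℕ) - n) - n = colOf C ((i:ℕ) - n) := by omega
    rw [he]
    exact rook_mem_of_mem_rowsOf hrook hrow
  · intro hp
    have hg := mem_grid.mp (hCg hp)
    refine Finset.mem_image.mpr ⟨⟨p.1 + n, by omega⟩, ?_, ?_⟩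
    · simp only [Finset.mem_filter_univ, Finset.mem_filter, Finset.mem_univ, true_and, PiPerm_apply]
      have hrow : p.1 ∈ rowsOf C := mem_rowsOf.mpr ⟨p, hp, rfl⟩
      have hcv : bigF n k C σ hS hT (p.1 + n) = n + colOf C p.1 := by
        rw [bigF_bot hS hT (by omega)]
        have he : p.1 + n - n = p.1 := by omega
        rw [he, botF_of_R hS hT hrow]
      refine Finset.mem_filter.mpr ⟨Finset.mem_univ _, ?_⟩
      constructor
      · simp
      · show n ≤ bigF n k C σ hS hT (p.1 + n)
        rw [hcv]
        omega
    · have hrow : p.1 ∈ rowsOf C := mem_rowsOf.mpr ⟨p, hp, rfl⟩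
      have hcv : bigF n k C σ hS hT (p.1 + n) = n + colOf C p.1 := by
        rw [bigF_bot hS hT (by omega)]
        have he : p.1 + n - n = p.1 := by omega
        rw [he, botF_of_R hS hT hrow]
      show (p.1 + n - n, bigF n k C σ hS hT (p.1 + n) - n) = p
      rw [hcv, colOf_eq hrook hp]
      have e1 : p.1 + n - n = p.1 := by omega
      have e2 : n + p.2 - n = p.2 := by omega
      rw [e1, e2]

lemma PiPerm_sigma_inj {σ' : Equiv.Perm (Fin k)}
    (h : PiPerm σ hS hT hCg hrook = PiPerm σ' hS hT hCg hrook) : σ = σ' := by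
  refine Equiv.ext fun a => ?_
  have hsm := (((Sset n C).orderIsoOfFin hS) a).2
  have hsl := (mem_Sset.mp hsm).1
  have happ := congrArg (fun ρ : Equiv.Perm (Fin (2*n)) =>
    ((ρ (⟨(((Sset n C).orderIsoOfFin hS) a : ℕ) + n, by omega⟩ : Fin (2*n))) : ℕ)) h
  simp only [PiPerm_apply] at happ
  rw [bigF_bot hS hT (by omega), bigF_bot hS hT (by omega)] at happ
  have he : (((Sset n C).orderIsoOfFin hS) a : ℕ) + n - n
      = (((Sset n C).orderIsoOfFin hS) a : ℕ) := by omega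
  rw [he] at happ
  rw [botF_of_S hS hT hsm, botF_of_S hS hT hsm, tauF_sIso hS hT, tauF_sIso hS hT] at happ
  exact ((Tset n C).orderIsoOfFin hT).injective (Subtype.ext happ)

end Decode

lemma mem_rookConfigs {A C : Board} {m : ℕ} :
    C ∈ rookConfigs A m ↔ C ⊆ A ∧ C.card = m ∧ Rook C := by
  rw [rookConfigs, Finset.mem_filter, Finset.mem_powerset]
  exact Iff.rfl

/-- For an `n × n` board `A`,
`RB^{A^↻#A}(q,t) = Σ_{i=0}^n R_{n-i}^A(q²) · [i]!_{q²} · q^{-i²} · t^i`. -/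
theorem RB_blockSharp (n : ℕ) (A : Board) (hA : A ⊆ grid n n) :
    RB qvar tvar n (blockSharp n n (rot180 n n A) A) =
      ∑ i ∈ Finset.range (n + 1),
        qRook (qvar ^ 2) n n A (n - i) * qFact (qvar ^ 2) i * qvar ^ (-(i : ℤ) ^ 2) *
          tvar ^ i := by
  classical
  have hq0 : qvar ≠ 0 := by
    rw [qvar]
    simp only [ne_eq, IsFractionRing.to_map_eq_zero_iff]
    exact MvPolynomial.X_ne_zero 0
  rw [RB]
  have hprops : ∀ d ∈ (Finset.range (n+1)).sigma
      (fun k => (rookConfigs A (n-k)) ×ˢ (Finset.univ : Finset (Equiv.Perm (Fin k)))),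
      d.1 ≤ n ∧ d.2.1 ⊆ A ∧ d.2.1.card = n - d.1 ∧ Rook d.2.1 := by
    intro d hd
    rw [Finset.mem_sigma, Finset.mem_product] at hd
    obtain ⟨h1, h2, -⟩ := hd
    obtain ⟨hsub, hcard, hrk⟩ := mem_rookConfigs.mp h2
    exact ⟨by have := Finset.mem_range.mp h1; omega, hsub, hcard, hrk⟩
  have key : ∑ d ∈ (Finset.range (n+1)).sigma
        (fun k => (rookConfigs A (n-k)) ×ˢ (Finset.univ : Finset (Equiv.Perm (Fin k)))),
        ((qvar^2) ^ invStat n n d.2.1 * (qvar^2) ^ inversions d.2.2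
          * qvar ^ (-(d.1:ℤ)^2) * tvar ^ d.1)
      = ∑ π ∈ Finset.univ.filter (fun π : Equiv.Perm (Fin (2*n)) =>
          rot180Perm π = π ∧ Covers (blockSharp n n (rot180 n n A) A) π),
          qvar ^ inversions π * tvar ^ negStat n π := by
    refine Finset.sum_bij (fun d hd => PiPerm d.2.2
        (card_Sset (hprops d hd).1 ((hprops d hd).2.1.trans hA) (hprops d hd).2.2.2
          (hprops d hd).2.2.1)
        (card_Tset (hprops d hd).1 ((hprops d hd).2.1.trans hA) (hprops d hd).2.2.2
          (hprops d hd).2.2.1)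
        ((hprops d hd).2.1.trans hA) (hprops d hd).2.2.2) ?_ ?_ ?_ ?_
    · intro d hd
      simp only [Finset.mem_filter, Finset.mem_univ, true_and]
      exact ⟨PiPerm_symmetric _ _ _ _, PiPerm_covers _ _ _ _ (hprops d hd).2.1 hA⟩
    · rintro ⟨k1, C1, σ1⟩ hd1 ⟨k2, C2, σ2⟩ hd2 heq
      obtain ⟨hkn1, hsub1, hcard1, hrook1⟩ := hprops _ hd1
      obtain ⟨hkn2, hsub2, hcard2, hrook2⟩ := hprops _ hd2
      have hS1 : (Sset n C1).card = k1 := card_Sset hkn1 (hsub1.trans hA) hrook1 hcard1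
      have hT1 : (Tset n C1).card = k1 := card_Tset hkn1 (hsub1.trans hA) hrook1 hcard1
      have hS2 : (Sset n C2).card = k2 := card_Sset hkn2 (hsub2.trans hA) hrook2 hcard2
      have hT2 : (Tset n C2).card = k2 := card_Tset hkn2 (hsub2.trans hA) hrook2 hcard2
      have hk : k1 = k2 :=
        (negStat_PiPerm (σ := σ1) hS1 hT1 (hsub1.trans hA) hrook1).symm.trans
          ((congrArg (negStat n) heq).trans
            (negStat_PiPerm (σ := σ2) hS2 hT2 (hsub2.trans hA) hrook2))
      subst hk
      have hC : C1 = C2 :=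
        (Crec_PiPerm hS1 hT1 (hsub1.trans hA) hrook1 (σ := σ1)).symm.trans
          ((congrArg (Crec n) heq).trans
            (Crec_PiPerm hS2 hT2 (hsub2.trans hA) hrook2 (σ := σ2)))
      subst hC
      have hσ : σ1 = σ2 :=
        PiPerm_sigma_inj hS1 hT1 (hsub1.trans hA) hrook1 heq
      rw [hσ]
    · intro π hπ
      simp only [Finset.mem_filter, Finset.mem_univ, true_and] at hπ
      obtain ⟨hsym, hcov⟩ := hπ
      have hCgA : Crec n π ⊆ A := Crec_subset hA hcov
      have hCg0 : Crec n π ⊆ grid n n := hCgA.trans hA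
      have hS0 : (Sset n (Crec n π)).card = negStat n π :=
        card_Sset (negStat_le π) hCg0 Crec_rook Crec_card
      have hT0 : (Tset n (Crec n π)).card = negStat n π :=
        card_Tset (negStat_le π) hCg0 Crec_rook Crec_card
      refine ⟨⟨negStat n π, (Crec n π, sigRec n π hsym hS0 hT0)⟩, ?_, ?_⟩
      · rw [Finset.mem_sigma, Finset.mem_product]
        exact ⟨Finset.mem_range.mpr (by show negStat n π < n + 1; have := negStat_le π; omega),
          mem_rookConfigs.mpr ⟨hCgA, Crec_card, Crec_rook⟩, Finset.mem_univ _⟩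
      · exact PiPerm_eq_of hA hsym hcov hS0 hT0 hCg0
    · intro d hd
      obtain ⟨hkn', hsub', hcard', hrook'⟩ := hprops d hd
      have hS' : (Sset n d.2.1).card = d.1 := card_Sset hkn' (hsub'.trans hA) hrook' hcard'
      have hT' : (Tset n d.2.1).card = d.1 := card_Tset hkn' (hsub'.trans hA) hrook' hcard'
      have hneg := negStat_PiPerm (σ := d.2.2) hS' hT' (hsub'.trans hA) hrook'
      have hkey := key_count (σ := d.2.2) hS' hT' (hsub'.trans hA) hrook' hkn' hcard'
      rw [hneg]
      have hzz : (qvar : QTfield) ^ (-(d.1:ℤ)^2) = (qvar ^ (d.1*d.1) : QTfield)⁻¹ := by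
        rw [show (-(d.1:ℤ)^2) = -((d.1*d.1 : ℕ) : ℤ) by push_cast; ring, zpow_neg,
          zpow_natCast]
      rw [hzz, ← pow_mul, ← pow_mul, ← pow_add]
      rw [show 2 * invStat n n d.2.1 + 2 * inversions d.2.2
          = inversions (PiPerm d.2.2 hS' hT' (hsub'.trans hA) hrook') + d.1 * d.1
          from hkey.symm]
      rw [pow_add, mul_assoc (qvar ^ inversions (PiPerm d.2.2 hS' hT' (hsub'.trans hA) hrook')),
        mul_inv_cancel₀ (pow_ne_zero _ hq0), mul_one]
  rw [← key, Finset.sum_sigma]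
  refine Finset.sum_congr rfl fun j hj => ?_
  rw [Finset.sum_product]
  have hσsum : ∀ x : QTfield,
      (∑ σ : Equiv.Perm (Fin j), x * (qvar^2)^(inversions σ) * qvar^(-(j:ℤ)^2) * tvar^j)
        = x * qFact (qvar^2) j * qvar^(-(j:ℤ)^2) * tvar^j := by
    intro x
    rw [← Finset.sum_mul, ← Finset.sum_mul, ← Finset.mul_sum, sum_pow_inversions]
  rw [qRook, Finset.sum_mul, Finset.sum_mul, Finset.sum_mul]
  refine Finset.sum_congr rfl fun C hC => ?_
  dsimp only
  exact hσsum _
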